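/- arXiv:1706.09718 — 6 statements merged into one kernel-verified Lean document; each statement's English description precedes it below -/
import Mathlib

section
/- Let a, b, c > 0, let X have the Kummer distribution K(a, b−a, c) and let Y have the Gamma distribution G(b, c), with X and Y independent. Define U = Y/(1+X) and V = X(1 + Y/(1+X)). Then U and V are independent, U has the Kummer distribution K(b, a−b, c) and V has the Gamma distribution G(a, c). -/
open MeasureTheory ProbabilityTheory Filter Topology Set

/-- `μ` is the Kummer distribution `K(a,b,c)`: it has a density on `(0,∞)` proportional to
`x^(a-1) (1+x)^(-(a+b)) exp (-c x)` with respect to Lebesgue measure. -/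
def IsKummer (μ : Measure ℝ) (a b c : ℝ) : Prop :=
  ∃ C : ℝ, 0 < C ∧
    μ = volume.withDensity fun x =>
      ENNReal.ofReal ((Ioi (0 : ℝ)).indicator
        (fun x => C * x ^ (a - 1) * (1 + x) ^ (-(a + b)) * Real.exp (-(c * x))) x)

/-- `μ` is the Gamma distribution `G(b,c)`: it has a density on `(0,∞)` proportional to
`y^(b-1) exp (-c y)` with respect to Lebesgue measure. -/
def IsGamma (μ : Measure ℝ) (b c : ℝ) : Prop :=
  ∃ C : ℝ, 0 < C ∧
    μ = volume.withDensity fun x =>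
      ENNReal.ofReal ((Ioi (0 : ℝ)).indicator
        (fun x => C * x ^ (b - 1) * Real.exp (-(c * x))) x)

namespace KummerHV

noncomputable section

/-- The transformation `(x, y) ↦ (y/(1+x), x + y - y/(1+x))`, an involution of `(0,∞)²`. -/
def T : ℝ × ℝ → ℝ × ℝ := fun p => (p.2 * (1 + p.1)⁻¹, p.1 + p.2 - p.2 * (1 + p.1)⁻¹)

lemma T_measurable : Measurable T := by
  unfold T
  fun_prop

/-- The open positive quadrant. -/
def S : Set (ℝ × ℝ) := Ioi (0:ℝ) ×ˢ Ioi (0:ℝ)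

lemma S_meas : MeasurableSet S := measurableSet_Ioi.prod measurableSet_Ioi

lemma T_mapsTo : MapsTo T S S := by
  rintro ⟨x, y⟩ ⟨hx, hy⟩
  simp only [S, mem_prod, mem_Ioi] at hx hy ⊢
  have h1 : (0:ℝ) < 1 + x := by linarith
  refine ⟨mul_pos hy (inv_pos.2 h1), ?_⟩
  show (0:ℝ) < x + y - y * (1 + x)⁻¹
  have : x + y - y * (1 + x)⁻¹ = x * (1 + x + y) / (1 + x) := by
    field_simp; ring
  rw [this]
  positivity

lemma T_invol : ∀ p ∈ S, T (T p) = p := by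
  rintro ⟨x, y⟩ ⟨hx, hy⟩
  simp only [S, mem_prod, mem_Ioi] at hx hy
  have h1 : (0:ℝ) < 1 + x := by linarith
  have h2 : (0:ℝ) < 1 + y * (1 + x)⁻¹ := by positivity
  simp only [T, Prod.mk.injEq]
  constructor
  · field_simp
    ring
  · field_simp
    ring

lemma T_injOn : InjOn T S := by
  intro p hp q hq h
  rw [← T_invol p hp, ← T_invol q hq, h]

lemma T_image : T '' S = S := by
  apply Subset.antisymm (T_mapsTo.image_subset)
  intro p hp
  exact ⟨T p, T_mapsTo hp, T_invol p hp⟩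

/-- The derivative of `T`. -/
def B (p : ℝ × ℝ) : ℝ × ℝ →L[ℝ] ℝ × ℝ :=
  LinearMap.toContinuousLinearMap (Matrix.toLin (Module.Basis.finTwoProd ℝ) (Module.Basis.finTwoProd ℝ)
    !![-(p.2 * ((1 + p.1) ^ 2)⁻¹), (1 + p.1)⁻¹;
       1 + p.2 * ((1 + p.1) ^ 2)⁻¹, 1 - (1 + p.1)⁻¹])

lemma hasFDerivAt_T {p : ℝ × ℝ} (hp : (1:ℝ) + p.1 ≠ 0) : HasFDerivAt T (B p) p := by
  have hw : HasFDerivAt (fun q : ℝ × ℝ => (1 + q.1)⁻¹)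
      ((-(((1 + p.1) ^ 2)⁻¹)) • ContinuousLinearMap.fst ℝ ℝ ℝ) p := by
    have h1 : HasFDerivAt (fun q : ℝ × ℝ => 1 + q.1) (ContinuousLinearMap.fst ℝ ℝ ℝ) p :=
      (hasFDerivAt_fst (𝕜 := ℝ) (p := p)).const_add 1
    exact (hasDerivAt_inv hp).comp_hasFDerivAt p h1
  have hu : HasFDerivAt (fun q : ℝ × ℝ => q.2 * (1 + q.1)⁻¹)
      (p.2 • ((-(((1 + p.1) ^ 2)⁻¹)) • ContinuousLinearMap.fst ℝ ℝ ℝ) +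
        (1 + p.1)⁻¹ • ContinuousLinearMap.snd ℝ ℝ ℝ) p :=
    (hasFDerivAt_snd (𝕜 := ℝ) (p := p)).mul hw
  have hv : HasFDerivAt (fun q : ℝ × ℝ => q.1 + q.2 - q.2 * (1 + q.1)⁻¹)
      ((ContinuousLinearMap.fst ℝ ℝ ℝ + ContinuousLinearMap.snd ℝ ℝ ℝ) -
        (p.2 • ((-(((1 + p.1) ^ 2)⁻¹)) • ContinuousLinearMap.fst ℝ ℝ ℝ) +
          (1 + p.1)⁻¹ • ContinuousLinearMap.snd ℝ ℝ ℝ)) p :=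
    ((hasFDerivAt_fst (𝕜 := ℝ) (p := p)).add (hasFDerivAt_snd (𝕜 := ℝ) (p := p))).sub hu
  have H := hu.prodMk hv
  unfold T B
  rw [Matrix.toLin_finTwoProd_toContinuousLinearMap]
  convert H using 2
  all_goals try rfl
  all_goals refine ContinuousLinearMap.ext fun q => ?_
  all_goals simp [smul_smul]
  all_goals try ring

lemma B_det (p : ℝ × ℝ) (hp : (1:ℝ) + p.1 ≠ 0) :
    (B p).det = -((1 + p.1 + p.2) * ((1 + p.1) ^ 2)⁻¹) := by
  simp only [B, ContinuousLinearMap.det, LinearMap.toContinuousLinearMap,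
    LinearEquiv.coe_mk]
  show LinearMap.det (Matrix.toLin (Module.Basis.finTwoProd ℝ) (Module.Basis.finTwoProd ℝ) _) = _
  rw [LinearMap.det_toLin, Matrix.det_fin_two_of]
  field_simp
  ring

/-- The key density transformation identity. -/
lemma key (a b c K : ℝ) {x y : ℝ} (hx : 0 < x) (hy : 0 < y) :
    ((1 + x + y) * ((1 + x) ^ 2)⁻¹) *
      ((K * (y * (1 + x)⁻¹) ^ (b - 1) * (1 + y * (1 + x)⁻¹) ^ (-a) *
          Real.exp (-(c * (y * (1 + x)⁻¹)))) *
        ((x + y - y * (1 + x)⁻¹) ^ (a - 1) *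
          Real.exp (-(c * (x + y - y * (1 + x)⁻¹))))) =
    (K * x ^ (a - 1) * (1 + x) ^ (-b) * Real.exp (-(c * x))) *
      (y ^ (b - 1) * Real.exp (-(c * y))) := by
  have hP : (0:ℝ) < 1 + x := by linarith
  have hQ : (0:ℝ) < 1 + x + y := by linarith
  set P := 1 + x with hPdef
  set Q := 1 + x + y with hQdef
  have hu : y * P⁻¹ = y / P := (div_eq_mul_inv y P).symm
  have h1u : 1 + y * P⁻¹ = Q / P := by field_simp [hQdef]; try ring
  have hv : x + y - y * P⁻¹ = x * Q / P := by field_simp [hQdef]; try ring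
  have hexp : Real.exp (-(c * (y * P⁻¹))) * Real.exp (-(c * (x + y - y * P⁻¹))) =
      Real.exp (-(c * x)) * Real.exp (-(c * y)) := by
    rw [← Real.exp_add, ← Real.exp_add]; congr 1; ring
  have e1 : (y * P⁻¹) ^ (b - 1) = y ^ (b - 1) / P ^ (b - 1) := by
    rw [hu, Real.div_rpow hy.le hP.le]
  have e2 : (1 + y * P⁻¹) ^ (-a) = Q ^ (-a) / P ^ (-a) := by
    rw [h1u, Real.div_rpow hQ.le hP.le]
  have e3 : (x + y - y * P⁻¹) ^ (a - 1) = x ^ (a - 1) * Q ^ (a - 1) / P ^ (a - 1) := by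
    rw [hv, Real.div_rpow (by positivity) hP.le, Real.mul_rpow hx.le hQ.le]
  have eQ : Q * Q ^ (-a) * Q ^ (a - 1) = 1 := by
    nth_rewrite 1 [← Real.rpow_one Q]
    rw [← Real.rpow_add hQ, ← Real.rpow_add hQ]
    convert Real.rpow_zero Q using 2
    ring
  have ePP : ((P:ℝ) ^ (2:ℕ))⁻¹ * (P ^ (b-1))⁻¹ * (P ^ (-a))⁻¹ * (P ^ (a-1))⁻¹ =
      (P ^ (b:ℝ))⁻¹ := by
    rw [← Real.rpow_natCast P 2, ← Real.rpow_neg hP.le, ← Real.rpow_neg hP.le,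
      ← Real.rpow_neg hP.le, ← Real.rpow_neg hP.le, ← Real.rpow_neg hP.le,
      ← Real.rpow_add hP, ← Real.rpow_add hP, ← Real.rpow_add hP]
    congr 1
    push_cast
    ring
  have hPb : P ^ (-b) = (P ^ (b:ℝ))⁻¹ := Real.rpow_neg hP.le b
  rw [e1, e2, e3]
  calc Q * (P ^ 2)⁻¹ *
      (K * (y ^ (b-1) / P ^ (b-1)) * (Q ^ (-a) / P ^ (-a)) * Real.exp (-(c * (y * P⁻¹))) *
        (x ^ (a-1) * Q ^ (a-1) / P ^ (a-1) * Real.exp (-(c * (x + y - y * P⁻¹)))))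
      = K * x ^ (a-1) * y ^ (b-1) * (Q * Q ^ (-a) * Q ^ (a-1)) *
          ((P ^ (2:ℕ))⁻¹ * (P ^ (b-1))⁻¹ * (P ^ (-a))⁻¹ * (P ^ (a-1))⁻¹) *
          (Real.exp (-(c * (y * P⁻¹))) * Real.exp (-(c * (x + y - y * P⁻¹)))) := by
        rw [div_eq_mul_inv, div_eq_mul_inv, div_eq_mul_inv]
        ring
    _ = (K * x ^ (a - 1) * P ^ (-b) * Real.exp (-(c * x))) *
          (y ^ (b - 1) * Real.exp (-(c * y))) := by
        rw [eQ, ePP, hexp, hPb]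
        ring

lemma ofReal_indicator_comm (h : ℝ × ℝ → ℝ) :
    (fun p => ENNReal.ofReal (S.indicator h p)) =
      S.indicator (fun p => ENNReal.ofReal (h p)) := by
  funext p
  by_cases hp : p ∈ S <;> simp [indicator, hp]

/-- The change-of-variables result at the level of measures. -/
lemma map_T_withDensity {f g : ℝ × ℝ → ℝ} (hgm : Measurable g)
    (hkey : ∀ p ∈ S, |(B p).det| * g (T p) = f p) :
    Measure.map T ((volume : Measure (ℝ × ℝ)).withDensity
        fun p => ENNReal.ofReal (S.indicator f p)) =
      (volume : Measure (ℝ × ℝ)).withDensity fun p => ENNReal.ofReal (S.indicator g p) := by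
  ext A hA
  rw [Measure.map_apply T_measurable hA, ofReal_indicator_comm, ofReal_indicator_comm,
    withDensity_indicator S_meas, withDensity_indicator S_meas,
    withDensity_apply _ (T_measurable hA), withDensity_apply _ hA,
    Measure.restrict_restrict (T_measurable hA), Measure.restrict_restrict hA]
  have himg : A ∩ S = T '' (S ∩ T ⁻¹' A) := by
    rw [Set.image_inter_preimage, T_image, inter_comm]
  rw [himg]
  have hsub : S ∩ T ⁻¹' A ⊆ S := inter_subset_left
  have hsmeas : MeasurableSet (S ∩ T ⁻¹' A) := S_meas.inter (T_measurable hA)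
  rw [lintegral_image_eq_lintegral_abs_det_fderiv_mul volume hsmeas
    (fun p hp => ((hasFDerivAt_T (p := p) ?_).hasFDerivWithinAt)) (T_injOn.mono hsub)
    (fun p => ENNReal.ofReal (g p))]
  · rw [inter_comm]
    refine setLIntegral_congr_fun hsmeas (fun p hp => ?_)
    rw [← ENNReal.ofReal_mul (abs_nonneg _), hkey p (hsub hp)]
  · have : (0:ℝ) < p.1 := (hsub hp).1
    intro h
    linarith

/-- Product of densities. -/
lemma prod_wd {f g : ℝ → ENNReal} (hf : Measurable f) (hg : Measurable g)
    [SigmaFinite (volume.withDensity f)] [SigmaFinite (volume.withDensity g)] :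
    (volume.withDensity f).prod (volume.withDensity g) =
      (volume : Measure (ℝ × ℝ)).withDensity (fun p => f p.1 * g p.2) := by
  refine Measure.prod_eq fun s t hs ht => ?_
  rw [withDensity_apply _ (hs.prod ht), Measure.volume_eq_prod ℝ ℝ, ← Measure.prod_restrict,
    lintegral_prod_mul hf.aemeasurable hg.aemeasurable,
    withDensity_apply _ hs, withDensity_apply _ ht]

end

end KummerHV

open KummerHV in
/-- **HV independence property for Kummer and Gamma random variables.**
If `X ~ K(a, b-a, c)` and `Y ~ G(b, c)` are independent, then `U = Y/(1+X)` and
`V = X(1 + Y/(1+X))` are independent, with `U ~ K(b, a-b, c)` and `V ~ G(a, c)`. -/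
theorem kummer_gamma_hv_property
    {Ω : Type*} [MeasurableSpace Ω] {Pr : Measure Ω} [IsProbabilityMeasure Pr]
    {a b c : ℝ} (ha : 0 < a) (hb : 0 < b) (hc : 0 < c)
    (X Y : Ω → ℝ) (hX : Measurable X) (hY : Measurable Y)
    (hXpos : ∀ ω, 0 < X ω) (hYpos : ∀ ω, 0 < Y ω)
    (hindep : IndepFun X Y Pr)
    (hlawX : IsKummer (Measure.map X Pr) a (b - a) c)
    (hlawY : IsGamma (Measure.map Y Pr) b c)
    (U V : Ω → ℝ)
    (hU : U = fun ω => Y ω / (1 + X ω))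
    (hV : V = fun ω => X ω * (1 + Y ω / (1 + X ω))) :
    IndepFun U V Pr ∧
      IsKummer (Measure.map U Pr) b (a - b) c ∧ IsGamma (Measure.map V Pr) a c := by
  obtain ⟨C1, hC1, hlX⟩ := hlawX
  obtain ⟨C2, hC2, hlY⟩ := hlawY
  rw [show -(a + (b - a)) = -b by ring] at hlX
  set K : ℝ := C1 * C2 with hKdef
  have hK : 0 < K := mul_pos hC1 hC2
  -- density functions
  set φX : ℝ → ℝ := fun x => C1 * x ^ (a - 1) * (1 + x) ^ (-b) * Real.exp (-(c * x)) with hφX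
  set φY : ℝ → ℝ := fun y => C2 * y ^ (b - 1) * Real.exp (-(c * y)) with hφY
  set ψU : ℝ → ℝ := fun u => K * u ^ (b - 1) * (1 + u) ^ (-a) * Real.exp (-(c * u)) with hψU
  set ψV : ℝ → ℝ := fun v => v ^ (a - 1) * Real.exp (-(c * v)) with hψV
  have hφXm : Measurable φX := by unfold φX; fun_prop
  have hφYm : Measurable φY := by unfold φY; fun_prop
  have hψUm : Measurable ψU := by unfold ψU; fun_prop
  have hψVm : Measurable ψV := by unfold ψV; fun_prop
  -- measurability of U, V
  have hUm : Measurable U := by rw [hU]; fun_prop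
  have hVm : Measurable V := by rw [hV]; fun_prop
  -- joint law of (X, Y)
  have hjointXY : Measure.map (fun ω => (X ω, Y ω)) Pr =
      (Measure.map X Pr).prod (Measure.map Y Pr) :=
    (ProbabilityTheory.indepFun_iff_map_prod_eq_prod_map_map hX.aemeasurable
      hY.aemeasurable).mp hindep
  -- joint law of (X, Y) as a density on the plane
  have hXY_wd : Measure.map (fun ω => (X ω, Y ω)) Pr =
      (volume : Measure (ℝ × ℝ)).withDensity
        (fun p => ENNReal.ofReal (S.indicator (fun p => φX p.1 * φY p.2) p)) := by
    rw [hjointXY, hlX, hlY, prod_wd (hφXm.indicator measurableSet_Ioi).ennreal_ofReal (hφYm.indicator measurableSet_Ioi).ennreal_ofReal]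
    congr 1
    funext p
    by_cases h1 : p.1 ∈ Ioi (0:ℝ) <;> by_cases h2 : p.2 ∈ Ioi (0:ℝ) <;>
      simp only [indicator, S, mem_prod, h1, h2, if_true, if_false, and_true, and_false,
        false_and, true_and, if_neg, ENNReal.ofReal_zero, mul_zero, zero_mul]
    · rw [← ENNReal.ofReal_mul]
      have : (0:ℝ) < p.1 := h1
      have hC1' := hC1
      positivity
  -- (U, V) = T ∘ (X, Y)
  have hUVeq : (fun ω => (U ω, V ω)) = T ∘ (fun ω => (X ω, Y ω)) := by
    funext ω
    have hx := hXpos ω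
    have h1 : (1:ℝ) + X ω ≠ 0 := by linarith
    simp only [Function.comp, T, hU, hV, Prod.mk.injEq]
    constructor
    · rw [div_eq_mul_inv]
    · field_simp
      ring
  -- the key pointwise density identity
  have hkey : ∀ p ∈ S, |(B p).det| * (ψU (T p).1 * ψV (T p).2) = φX p.1 * φY p.2 := by
    rintro ⟨x, y⟩ ⟨hx, hy⟩
    simp only [S, mem_prod, mem_Ioi] at hx hy
    have h1 : (1:ℝ) + x ≠ 0 := by positivity
    rw [B_det _ h1]
    have habs : |(-((1 + (x,y).1 + (x,y).2) * ((1 + (x,y).1) ^ 2)⁻¹))| =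
        (1 + x + y) * ((1 + x) ^ 2)⁻¹ := by
      rw [abs_neg, abs_of_nonneg (by positivity)]
    rw [habs]
    show (1 + x + y) * ((1 + x) ^ 2)⁻¹ * (ψU (y * (1 + x)⁻¹) * ψV (x + y - y * (1 + x)⁻¹)) =
      φX x * φY y
    simp only [hψU, hψV, hφX, hφY]
    have := key a b c K hx hy
    calc (1 + x + y) * ((1 + x) ^ 2)⁻¹ *
        (K * (y * (1 + x)⁻¹) ^ (b - 1) * (1 + y * (1 + x)⁻¹) ^ (-a) *
            Real.exp (-(c * (y * (1 + x)⁻¹))) *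
          ((x + y - y * (1 + x)⁻¹) ^ (a - 1) *
            Real.exp (-(c * (x + y - y * (1 + x)⁻¹)))))
        = (K * x ^ (a - 1) * (1 + x) ^ (-b) * Real.exp (-(c * x))) *
            (y ^ (b - 1) * Real.exp (-(c * y))) := by
          rw [← this]
      _ = C1 * x ^ (a - 1) * (1 + x) ^ (-b) * Real.exp (-(c * x)) *
            (C2 * y ^ (b - 1) * Real.exp (-(c * y))) := by
          rw [hKdef]; ring
  -- joint law of (U, V)
  have hJoint : Measure.map (fun ω => (U ω, V ω)) Pr =
      (volume : Measure (ℝ × ℝ)).withDensity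
        (fun p => ENNReal.ofReal (S.indicator (fun p => ψU p.1 * ψV p.2) p)) := by
    rw [hUVeq, ← Measure.map_map T_measurable (hX.prodMk hY), hXY_wd,
      map_T_withDensity ((hψUm.comp measurable_fst).mul (hψVm.comp measurable_snd)) hkey]
    rfl
  -- split the joint density of (U, V) as a product
  set DU : ℝ → ENNReal := fun x => ENNReal.ofReal ((Ioi (0:ℝ)).indicator ψU x) with hDU
  set DV : ℝ → ENNReal := fun x => ENNReal.ofReal ((Ioi (0:ℝ)).indicator ψV x) with hDV
  set μ1 : Measure ℝ := volume.withDensity DU with hμ1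
  set μ2 : Measure ℝ := volume.withDensity DV with hμ2
  haveI : SigmaFinite μ1 := by rw [hμ1, hDU]; infer_instance
  haveI : SigmaFinite μ2 := by rw [hμ2, hDV]; infer_instance
  have hJoint' : Measure.map (fun ω => (U ω, V ω)) Pr = μ1.prod μ2 := by
    rw [hJoint, hμ1, hμ2, hDU, hDV, prod_wd (hψUm.indicator measurableSet_Ioi).ennreal_ofReal (hψVm.indicator measurableSet_Ioi).ennreal_ofReal]
    congr 1
    funext p
    by_cases h1 : p.1 ∈ Ioi (0:ℝ) <;> by_cases h2 : p.2 ∈ Ioi (0:ℝ) <;>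
      simp only [indicator, S, mem_prod, h1, h2, if_true, if_false, and_true, and_false,
        false_and, true_and, if_neg, ENNReal.ofReal_zero, mul_zero, zero_mul]
    · rw [← ENNReal.ofReal_mul]
      have h1' : (0:ℝ) < p.1 := h1
      have hK' := hK
      positivity
  -- total masses
  haveI : IsProbabilityMeasure (Measure.map (fun ω => (U ω, V ω)) Pr) :=
    Measure.isProbabilityMeasure_map (hUm.prodMk hVm).aemeasurable
  have hmass : μ1 univ * μ2 univ = 1 := by
    have hm := measure_univ (μ := Measure.map (fun ω => (U ω, V ω)) Pr)
    rw [hJoint', ← univ_prod_univ, Measure.prod_prod] at hm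
    exact hm
  set m1 := μ1 univ with hm1
  set m2 := μ2 univ with hm2
  have h2ne : m2 ≠ 0 := fun h => by simp [h] at hmass
  have h1ne : m1 ≠ 0 := fun h => by simp [h] at hmass
  have h1top : m1 ≠ ⊤ := fun h => by
    rw [h, ENNReal.top_mul h2ne] at hmass
    simp at hmass
  have h2top : m2 ≠ ⊤ := fun h => by
    rw [h, ENNReal.mul_top h1ne] at hmass
    simp at hmass
  -- marginal laws
  have hmapU : Measure.map U Pr = m2 • μ1 := by
    have hcomp : U = Prod.fst ∘ (fun ω => (U ω, V ω)) := rfl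
    rw [hcomp, ← Measure.map_map measurable_fst (hUm.prodMk hVm), hJoint',
      Measure.map_fst_prod]
  have hmapV : Measure.map V Pr = m1 • μ2 := by
    have hcomp : V = Prod.snd ∘ (fun ω => (U ω, V ω)) := rfl
    rw [hcomp, ← Measure.map_map measurable_snd (hUm.prodMk hVm), hJoint',
      Measure.map_snd_prod]
  refine ⟨?_, ?_, ?_⟩
  · -- independence
    rw [ProbabilityTheory.indepFun_iff_map_prod_eq_prod_map_map hUm.aemeasurable
      hVm.aemeasurable, hJoint', hmapU, hmapV]
    haveI : IsFiniteMeasure (m2 • μ1) := by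
      refine ⟨?_⟩
      rw [Measure.smul_apply, smul_eq_mul]
      exact ENNReal.mul_lt_top h2top.lt_top (by rw [← hm1] at *; exact h1top.lt_top)
    haveI : IsFiniteMeasure (m1 • μ2) := by
      refine ⟨?_⟩
      rw [Measure.smul_apply, smul_eq_mul]
      exact ENNReal.mul_lt_top h1top.lt_top h2top.lt_top
    refine (Measure.prod_eq fun s t hs ht => ?_).symm
    rw [Measure.prod_prod, Measure.smul_apply, Measure.smul_apply, smul_eq_mul, smul_eq_mul]
    calc μ1 s * μ2 t = (m1 * m2) * (μ1 s * μ2 t) := by rw [hmass, one_mul]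
      _ = m2 * μ1 s * (m1 * μ2 t) := by ring
  · -- U is Kummer (b, a-b, c)
    refine ⟨m2.toReal * K, mul_pos (ENNReal.toReal_pos h2ne h2top) hK, ?_⟩
    rw [hmapU, hμ1, ← withDensity_smul' m2 DU h2top]
    congr 1
    funext x
    simp only [Pi.smul_apply, hDU, smul_eq_mul]
    conv_lhs => rw [← ENNReal.ofReal_toReal h2top]
    rw [← ENNReal.ofReal_mul ENNReal.toReal_nonneg]
    congr 1
    by_cases hx : x ∈ Ioi (0:ℝ) <;>
      simp only [indicator, hx, if_true, if_false, mul_zero]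
    rw [hψU, show -(b + (a - b)) = -a by ring]
    ring
  · -- V is Gamma (a, c)
    refine ⟨m1.toReal, ENNReal.toReal_pos h1ne h1top, ?_⟩
    rw [hmapV, hμ2, ← withDensity_smul' m1 DV h1top]
    congr 1
    funext x
    simp only [Pi.smul_apply, hDV, smul_eq_mul]
    conv_lhs => rw [← ENNReal.ofReal_toReal h1top]
    rw [← ENNReal.ofReal_mul ENNReal.toReal_nonneg]
    congr 1
    by_cases hx : x ∈ Ioi (0:ℝ) <;>
      simp only [indicator, hx, if_true, if_false, mul_zero]
    rw [hψV]
    ring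
end

section
/- Let T : Ω_+ × Ω_+ → Ω_+ × Ω_+ be defined by T(x,y) = (u,v) with u = P((e+x)^{−1/2})y and v = P((e+u)^{1/2})x. Then T is an involution: T(T(x,y)) = (x,y) for all x, y ∈ Ω_+. -/
open Matrix

abbrev Mat (r : ℕ) : Type := Matrix (Fin r) (Fin r) ℝ

open Classical in
/-- the square root of a positive semidefinite matrix (junk value `0` otherwise) -/
noncomputable def msqrt {r : ℕ} (x : Mat r) : Mat r :=
  if h : x.PosSemidef then (h.1.eigenvectorUnitary : Mat r) *
    diagonal ((↑) ∘ (Real.sqrt ·) ∘ h.1.eigenvalues) * (star h.1.eigenvectorUnitary : Mat r) else 0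

/-- the map `T(x,y) = (u, v)` with `u = P((e+x)^{-1/2}) y` and `v = P((e+u)^{1/2}) x`,
where `P(y)x = y x y` -/
noncomputable def Tmap {r : ℕ} (p : Mat r × Mat r) : Mat r × Mat r :=
  let u := (msqrt (1 + p.1))⁻¹ * p.2 * (msqrt (1 + p.1))⁻¹
  (u, msqrt (1 + u) * p.1 * msqrt (1 + u))

lemma msqrt_posSemidef {r : ℕ} {x : Mat r} (h : x.PosSemidef) : (msqrt x).PosSemidef := by
  rw [msqrt, dif_pos h, star_eq_conjTranspose]
  refine (PosSemidef.diagonal (fun i => ?_)).mul_mul_conjTranspose_same _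
  simp [Real.sqrt_nonneg]

lemma msqrt_mul_self {r : ℕ} {x : Mat r} (h : x.PosSemidef) : msqrt x * msqrt x = x := by
  rw [msqrt, dif_pos h]
  conv_rhs => rw [h.1.spectral_theorem]
  have hU : (star h.1.eigenvectorUnitary : Mat r) * (h.1.eigenvectorUnitary : Mat r) = 1 :=
    Unitary.star_mul_self_of_mem h.1.eigenvectorUnitary.2
  rw [Unitary.conjStarAlgAut_apply]
  simp only [Matrix.mul_assoc]
  rw [← Matrix.mul_assoc (star _) (h.1.eigenvectorUnitary : Mat r), hU, Matrix.one_mul,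
    ← Matrix.mul_assoc (diagonal _) (diagonal _), diagonal_mul_diagonal]
  congr 3
  funext i
  simp [Real.mul_self_sqrt (h.eigenvalues_nonneg i)]

lemma isUnit_msqrt {r : ℕ} {x : Mat r} (h : x.PosDef) : IsUnit (msqrt x) := by
  rw [Matrix.isUnit_iff_isUnit_det]
  have h2 : (msqrt x).det * (msqrt x).det = x.det := by
    rw [← Matrix.det_mul, msqrt_mul_self h.posSemidef]
  have h3 := h.det_pos
  refine isUnit_iff_ne_zero.mpr fun h0 => ?_
  rw [h0, mul_zero] at h2
  exact absurd (h2 ▸ h3) (lt_irrefl _)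

lemma msqrt_isHermitian {r : ℕ} {x : Mat r} (h : x.PosSemidef) :
    (msqrt x).IsHermitian := (msqrt_posSemidef h).isHermitian

/-- **`T` is an involution on `Ω₊ × Ω₊`:** `T(T(x,y)) = (x,y)`. -/
theorem Tmap_involutive {r : ℕ} (x y : Mat r) (hx : x.PosDef) (hy : y.PosDef) :
    Tmap (Tmap (x, y)) = (x, y) := by
  have h1x : (1 + x).PosDef := Matrix.PosDef.one.add hx
  set s := msqrt (1 + x) with hs_def
  have hs_unit : IsUnit s := isUnit_msqrt h1x
  have hs_det : IsUnit s.det := Matrix.isUnit_iff_isUnit_det s |>.mp hs_unit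
  set u := s⁻¹ * y * s⁻¹ with hu_def
  -- u is positive semidefinite
  have hsinv_herm : (s⁻¹).IsHermitian := (msqrt_isHermitian h1x.posSemidef).inv
  have hu_psd : u.PosSemidef := by
    have := hy.posSemidef.conjTranspose_mul_mul_same s⁻¹
    rwa [hsinv_herm.eq] at this
  have h1u : (1 + u).PosDef := Matrix.PosDef.one.add_posSemidef hu_psd
  set b := msqrt (1 + u) with hb_def
  have hb_unit : IsUnit b := isUnit_msqrt h1u
  have hb_det : IsUnit b.det := Matrix.isUnit_iff_isUnit_det b |>.mp hb_unit
  have key1 : b⁻¹ * (b * x * b) * b⁻¹ = x := by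
    rw [Matrix.mul_assoc b x b, ← Matrix.mul_assoc (b⁻¹) b, Matrix.nonsing_inv_mul _ hb_det,
      Matrix.one_mul, Matrix.mul_assoc, Matrix.mul_nonsing_inv _ hb_det, Matrix.mul_one]
  have key2 : s * (s⁻¹ * y * s⁻¹) * s = y := by
    rw [Matrix.mul_assoc (s⁻¹) y (s⁻¹), ← Matrix.mul_assoc s (s⁻¹),
      Matrix.mul_nonsing_inv _ hs_det, Matrix.one_mul, Matrix.mul_assoc,
      Matrix.nonsing_inv_mul _ hs_det, Matrix.mul_one]
  show (b⁻¹ * (b * x * b) * b⁻¹,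
      msqrt (1 + b⁻¹ * (b * x * b) * b⁻¹) * u * msqrt (1 + b⁻¹ * (b * x * b) * b⁻¹)) = (x, y)
  rw [key1]
  exact Prod.ext rfl (by rw [← hs_def, hu_def, key2])
end

section
/- For any x ∈ Ω_+, the determinant (as an endomorphism of the vector space Ω of real r×r symmetric matrices) of the map P(x) : Ω → Ω, P(x)z = xzx, equals (det x)^{r+1}. -/
open Matrix

lemma Matrix.IsSymm.conj {r : ℕ} {s y : Mat r} (hs : s.IsSymm) (hy : y.IsSymm) :
    (s * y * s).IsSymm := by
  unfold Matrix.IsSymm at *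
  rw [transpose_mul, transpose_mul, hs, hy, ← mul_assoc]

lemma Matrix.IsHermitian.isSymm' {r : ℕ} {x : Mat r} (hx : x.IsHermitian) : x.IsSymm := by
  unfold Matrix.IsHermitian at hx
  unfold Matrix.IsSymm
  rw [← conjTranspose_eq_transpose_of_trivial, hx]

/-- the space `Ω` of real symmetric `r × r` matrices, as a submodule of all matrices -/
def SymMat (r : ℕ) : Submodule ℝ (Mat r) where
  carrier := {x | x.IsSymm}
  add_mem' := fun ha hb => ha.add hb
  zero_mem' := Matrix.isSymm_zero
  smul_mem' := fun c x hx => by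
    simp only [Set.mem_setOf_eq, Matrix.IsSymm, Matrix.transpose_smul] at *
    rw [hx]

/-- `P(x)` as an endomorphism `z ↦ x z x` of the space `Ω` of symmetric matrices -/
def Pendo {r : ℕ} (x : Mat r) (hx : x.IsSymm) : SymMat r →ₗ[ℝ] SymMat r where
  toFun z := ⟨x * (z : Mat r) * x, hx.conj z.2⟩
  map_add' z w := by
    ext1
    simp [mul_add, add_mul]
  map_smul' c z := by
    ext1
    simp [Matrix.mul_smul, Matrix.smul_mul]

open Finset

section Aux

/-- `Q(a)` : z ↦ a z aᵀ on symmetric matrices -/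
def Qendo {r : ℕ} (a : Mat r) : SymMat r →ₗ[ℝ] SymMat r where
  toFun z := ⟨a * (z : Mat r) * aᵀ, by
    have hz : (z : Mat r).IsSymm := z.2
    show (a * (z : Mat r) * aᵀ).IsSymm
    unfold Matrix.IsSymm at *
    rw [transpose_mul, transpose_mul, transpose_transpose, hz, mul_assoc]⟩
  map_add' z w := by ext1; simp [mul_add, add_mul]
  map_smul' c z := by ext1; simp [Matrix.mul_smul, Matrix.smul_mul]

lemma Qendo_mul {r : ℕ} (a b : Mat r) : Qendo (a * b) = (Qendo a).comp (Qendo b) := by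
  ext z
  simp [Qendo, transpose_mul, mul_assoc]

lemma Qendo_one {r : ℕ} : Qendo (1 : Mat r) = LinearMap.id := by
  ext z; simp [Qendo]

variable {r : ℕ}

abbrev PairIdx (r : ℕ) := {p : Fin r × Fin r // p.1 ≤ p.2}

/-- rebuild a symmetric matrix from its upper-triangular entries -/
def symOf (f : PairIdx r → ℝ) : Mat r :=
  Matrix.of fun i j => if h : i ≤ j then f ⟨(i, j), h⟩ else f ⟨(j, i), le_of_not_ge h⟩

lemma symOf_isSymm (f : PairIdx r → ℝ) : (symOf f).IsSymm := by
  ext i j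
  simp only [Matrix.transpose_apply, symOf, Matrix.of_apply]
  rcases le_total i j with h | h
  · rcases eq_or_lt_of_le h with rfl | hlt
    · simp
    · rw [dif_neg (not_le.2 hlt), dif_pos h]
  · rcases eq_or_lt_of_le h with rfl | hlt
    · simp
    · rw [dif_pos h, dif_neg (not_le.2 hlt)]

/-- the linear equivalence between symmetric matrices and upper-triangular coordinates -/
noncomputable def symEquiv (r : ℕ) : SymMat r ≃ₗ[ℝ] (PairIdx r → ℝ) where
  toFun z p := (z : Mat r) p.1.1 p.1.2
  map_add' z w := rfl
  map_smul' c z := rfl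
  invFun f := ⟨symOf f, symOf_isSymm f⟩
  left_inv z := by
    ext i j
    simp only [symOf, Matrix.of_apply]
    split
    · rfl
    · exact congrFun (congrFun z.2 i) j
  right_inv f := by
    funext p
    obtain ⟨⟨i, j⟩, h⟩ := p
    show dite _ _ _ = _
    exact dif_pos h

lemma det_Qendo_diagonal (d : Fin r → ℝ) :
    LinearMap.det (Qendo (Matrix.diagonal d)) = ∏ p : PairIdx r, (d p.1.1 * d p.1.2) := by
  have key : ((symEquiv r : SymMat r →ₗ[ℝ] (PairIdx r → ℝ)) ∘ₗ Qendo (Matrix.diagonal d) ∘ₗ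
      ((symEquiv r).symm : (PairIdx r → ℝ) →ₗ[ℝ] SymMat r)) =
      Matrix.toLin' (Matrix.diagonal fun p : PairIdx r => d p.1.1 * d p.1.2) := by
    apply LinearMap.ext; intro f; funext p
    simp only [LinearMap.coe_comp, Function.comp_apply, LinearEquiv.coe_coe,
      Matrix.toLin'_apply, Matrix.mulVec_diagonal]
    show (Matrix.diagonal d * symOf f * (Matrix.diagonal d)ᵀ) p.1.1 p.1.2 = _
    rw [Matrix.diagonal_transpose, Matrix.mul_diagonal, Matrix.diagonal_mul]
    have : symOf f p.1.1 p.1.2 = f p := by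
      obtain ⟨⟨i, j⟩, h⟩ := p
      exact dif_pos h
    rw [this]; ring
  calc LinearMap.det (Qendo (Matrix.diagonal d))
      = LinearMap.det ((symEquiv r : SymMat r →ₗ[ℝ] (PairIdx r → ℝ)) ∘ₗ Qendo (Matrix.diagonal d)
        ∘ₗ ((symEquiv r).symm : (PairIdx r → ℝ) →ₗ[ℝ] SymMat r)) :=
        (LinearMap.det_conj _ (symEquiv r)).symm
    _ = _ := by rw [key, LinearMap.det_toLin', Matrix.det_diagonal]

lemma prod_pairs (d : Fin r → ℝ) :
    ∏ p : PairIdx r, (d p.1.1 * d p.1.2) = (∏ i, d i) ^ (r + 1) := by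
  have h1 : ∏ p : PairIdx r, (d p.1.1 * d p.1.2)
      = ∏ p ∈ Finset.univ.filter (fun p : Fin r × Fin r => p.1 ≤ p.2), d p.1 * d p.2 :=
    (Finset.prod_subtype (Finset.univ.filter (fun p : Fin r × Fin r => p.1 ≤ p.2)) (by simp)
      (fun p => d p.1 * d p.2)).symm
  rw [h1, Finset.prod_filter, Fintype.prod_prod_type]
  have h2 : ∀ i : Fin r, (∏ j : Fin r, if i ≤ j then d i * d j else 1)
      = d i ^ (r - (i : ℕ)) * ∏ j ∈ Finset.Ici i, d j := by
    intro i
    rw [← Finset.prod_filter, Finset.filter_le_eq_Ici, Finset.prod_mul_distrib,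
      Finset.prod_const, Fin.card_Ici]
  simp only [h2]
  rw [Finset.prod_mul_distrib]
  have h3 : (∏ i : Fin r, ∏ j ∈ Finset.Ici i, d j) = ∏ j : Fin r, d j ^ ((j : ℕ) + 1) := by
    rw [Finset.prod_comm' (t' := Finset.univ) (s' := fun j => Finset.Iic j) (by simp)]
    exact Finset.prod_congr rfl fun j _ => by
      rw [Finset.prod_const, Fin.card_Iic]
  rw [h3, ← Finset.prod_mul_distrib, ← Finset.prod_pow]
  refine Finset.prod_congr rfl fun i _ => ?_
  rw [← pow_add]
  congr 1
  omega

end Aux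

lemma Pendo_eq_Qendo {r : ℕ} (x : Mat r) (hxs : x.IsSymm) : Pendo x hxs = Qendo x := by
  refine LinearMap.ext fun z => Subtype.ext ?_
  show x * (z : Mat r) * x = x * (z : Mat r) * xᵀ
  rw [hxs]

/-- **The determinant of `P(x)` as an endomorphism of the space of symmetric matrices is
`(det x)^(r+1)`.** -/
theorem det_Pendo {r : ℕ} (x : Mat r) (hx : x.PosDef) :
    LinearMap.det (Pendo x hx.1.isSymm') = x.det ^ (r + 1) := by
  have hH := hx.1
  set v : Mat r := (hH.eigenvectorUnitary : Mat r) with hv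
  set d : Fin r → ℝ := hH.eigenvalues with hd
  have hcoe : (RCLike.ofReal ∘ d : Fin r → ℝ) = d := funext fun i => rfl
  have hspec : x = v * Matrix.diagonal d * star v := by
    conv_lhs => rw [hH.spectral_theorem]
    rw [hcoe]
    rfl
  have hvu : v * star v = 1 :=
    (Matrix.mem_unitaryGroup_iff).mp hH.eigenvectorUnitary.2
  have hdet1 : LinearMap.det (Qendo v) * LinearMap.det (Qendo (star v)) = 1 := by
    rw [← LinearMap.det_comp, ← Qendo_mul, hvu, Qendo_one, LinearMap.det_id]
  have hdetx : x.det = ∏ i, d i := by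
    have := hH.det_eq_prod_eigenvalues
    simpa using this
  rw [Pendo_eq_Qendo]
  calc LinearMap.det (Qendo x)
      = LinearMap.det (Qendo (v * Matrix.diagonal d * star v)) := by rw [← hspec]
    _ = LinearMap.det (Qendo v) * LinearMap.det (Qendo (Matrix.diagonal d)) *
        LinearMap.det (Qendo (star v)) := by
        rw [Qendo_mul, Qendo_mul, LinearMap.det_comp, LinearMap.det_comp]
    _ = LinearMap.det (Qendo (Matrix.diagonal d)) := by
        rw [mul_comm (LinearMap.det (Qendo v)), mul_assoc, hdet1, mul_one]
    _ = (∏ i, d i) ^ (r + 1) := by rw [det_Qendo_diagonal, prod_pairs]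
    _ = x.det ^ (r + 1) := by rw [hdetx]
end

section
/- Let f : Ω_+ → ℝ be a measurable function such that f(x) + f(y) = f(x+y) for all x, y ∈ Ω_+. Then there exists c ∈ Ω such that f(x) = ⟨c, x⟩ for all x ∈ Ω_+. -/
open Matrix MeasureTheory

noncomputable instance (r : ℕ) : MeasurableSpace (Mat r) :=
  inferInstanceAs (MeasurableSpace (Fin r → Fin r → ℝ))

open Pointwise in
theorem cauchy1D (h : ℝ → ℝ) (hm : Measurable h)
    (ha : ∀ a b : ℝ, h (a + b) = h a + h b) : ∀ t : ℝ, h t = t * h 1 := by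
  have h0 : h 0 = 0 := by have := ha 0 0; simp at this; linarith
  set H : ℝ →+ ℝ := ⟨⟨h, h0⟩, fun a b => ha a b⟩ with hH
  have key : ∀ ε : ℝ, 0 < ε → {t : ℝ | |h t| < ε} ∈ nhds (0 : ℝ) := by
    intro ε hε
    set δ : ℝ := ε / 2 with hδ
    have hδpos : 0 < δ := by positivity
    set s : ℤ → Set ℝ := fun n => Set.Ioc (0:ℝ) 1 ∩ h ⁻¹' Set.Ico (n * δ) ((n + 1) * δ) with hs
    have hsm : ∀ n, MeasurableSet (s n) :=
      fun n => measurableSet_Ioc.inter (hm measurableSet_Ico)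
    have hcover : Set.Ioc (0:ℝ) 1 ⊆ ⋃ n : ℤ, s n := by
      intro t ht
      refine Set.mem_iUnion.2 ⟨⌊h t / δ⌋, ht, ?_, ?_⟩
      · rw [← le_div_iff₀ hδpos]; exact Int.floor_le _
      · rw [← div_lt_iff₀ hδpos]; push_cast; exact Int.lt_floor_add_one _
    have hex : ∃ n : ℤ, 0 < volume (s n) := by
      by_contra hc
      push_neg at hc
      have : volume (⋃ n : ℤ, s n) = 0 :=
        measure_iUnion_null fun n => le_antisymm (hc n) zero_le
      have h1 : volume (Set.Ioc (0:ℝ) 1) = 0 := measure_mono_null hcover this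
      rw [Real.volume_Ioc] at h1
      simp at h1
    obtain ⟨n, hn⟩ := hex
    have hst : s n - s n ∈ nhds (0 : ℝ) :=
      MeasureTheory.Measure.sub_mem_nhds_zero_of_addHaar_pos volume (s n) (hsm n) hn
    refine Filter.mem_of_superset hst ?_
    rintro u ⟨a, ha', b, hb', rfl⟩
    have hfa := ha'.2
    have hfb := hb'.2
    simp only [Set.mem_preimage, Set.mem_Ico] at hfa hfb
    have : h (a - b) = h a - h b := by
      have := ha (a - b) b; simp at this; linarith
    simp only [Set.mem_setOf_eq, this]
    rw [abs_lt]
    constructor <;> nlinarith [hfa.1, hfa.2, hfb.1, hfb.2]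
  have hcont0 : ContinuousAt h 0 := by
    rw [ContinuousAt, h0, Metric.tendsto_nhds]
    intro ε hε
    filter_upwards [key ε hε] with t ht
    simpa [Real.dist_eq] using ht
  have hcont : Continuous H := continuous_of_continuousAt_zero H hcont0
  intro t
  have := map_real_smul H hcont t 1
  simp at this; exact this

noncomputable def So {r : ℕ} (x : Mat r) : ℝ := ∑ i, ∑ j, |x i j|

lemma So_nonneg {r : ℕ} (x : Mat r) : 0 ≤ So x :=
  Finset.sum_nonneg fun i _ => Finset.sum_nonneg fun j _ => abs_nonneg _

lemma So_add {r : ℕ} (x y : Mat r) : So (x + y) ≤ So x + So y := by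
  unfold So
  rw [← Finset.sum_add_distrib]
  refine Finset.sum_le_sum fun i _ => ?_
  rw [← Finset.sum_add_distrib]
  exact Finset.sum_le_sum fun j _ => abs_add_le _ _

lemma So_smul {r : ℕ} (t : ℝ) (x : Mat r) : So (t • x) = |t| * So x := by
  unfold So
  simp [Finset.mul_sum, abs_mul]

lemma quad_bound {r : ℕ} (x : Mat r) (v : Fin r → ℝ) :
    |v ⬝ᵥ (x *ᵥ v)| ≤ So x * (v ⬝ᵥ v) := by
  have hQ : ∀ i j : Fin r, |v i| * |v j| ≤ v ⬝ᵥ v := by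
    intro i j
    have h1 : v i ^ 2 ≤ ∑ k, v k * v k := by
      have := Finset.single_le_sum (f := fun k => v k * v k)
        (fun k _ => mul_self_nonneg (v k)) (Finset.mem_univ i)
      nlinarith [this]
    have h2 : v j ^ 2 ≤ ∑ k, v k * v k := by
      have := Finset.single_le_sum (f := fun k => v k * v k)
        (fun k _ => mul_self_nonneg (v k)) (Finset.mem_univ j)
      nlinarith [this]
    have : |v i| * |v j| ≤ (v i ^ 2 + v j ^ 2) / 2 := by
      nlinarith [sq_abs (v i), sq_abs (v j), sq_nonneg (|v i| - |v j|)]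
    simp only [dotProduct]
    nlinarith
  calc |v ⬝ᵥ (x *ᵥ v)| = |∑ i, ∑ j, v i * (x i j * v j)| := by
        simp [dotProduct, mulVec, Finset.mul_sum]
    _ ≤ ∑ i, ∑ j, |v i * (x i j * v j)| := by
        refine (Finset.abs_sum_le_sum_abs _ _).trans ?_
        exact Finset.sum_le_sum fun i _ => Finset.abs_sum_le_sum_abs _ _
    _ ≤ ∑ i, ∑ j, |x i j| * (v ⬝ᵥ v) := by
        refine Finset.sum_le_sum fun i _ => Finset.sum_le_sum fun j _ => ?_
        rw [abs_mul, abs_mul]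
        calc |v i| * (|x i j| * |v j|) = |x i j| * (|v i| * |v j|) := by ring
          _ ≤ |x i j| * (v ⬝ᵥ v) := by
              exact mul_le_mul_of_nonneg_left (hQ i j) (abs_nonneg _)
    _ = So x * (v ⬝ᵥ v) := by rw [So, Finset.sum_mul]; congr 1; ext i; rw [Finset.sum_mul]

lemma posdef_shift {r : ℕ} (x : Mat r) (hx : x.IsSymm) {N : ℝ} (hN : So x < N) :
    (x + N • 1).PosDef := by
  rw [Matrix.posDef_iff_dotProduct_mulVec]
  constructor
  · unfold Matrix.IsHermitian
    rw [conjTranspose_add, conjTranspose_smul]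
    rw [show (x : Mat r)ᴴ = xᵀ from rfl, show ((1 : Mat r))ᴴ = (1 : Mat r)ᵀ from rfl]
    rw [hx, transpose_one]
    simp
  · intro v hv
    have hvv : 0 < v ⬝ᵥ v := by
      have := Matrix.dotProduct_star_self_pos_iff (R := ℝ) (v := v)
      simpa using this.mpr hv
    have hb := quad_bound x v
    have : star v ⬝ᵥ ((x + N • 1) *ᵥ v) = v ⬝ᵥ (x *ᵥ v) + N * (v ⬝ᵥ v) := by
      simp [add_mulVec, dotProduct_add, smul_mulVec, dotProduct_smul, smul_eq_mul]
    rw [this]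
    have h1 : -(So x * (v ⬝ᵥ v)) ≤ v ⬝ᵥ (x *ᵥ v) := neg_le_of_abs_le hb
    nlinarith

lemma So_zero {r : ℕ} : So (0 : Mat r) = 0 := by simp [So]

lemma smul_one_posdef {r : ℕ} {N : ℝ} (hN : 0 < N) : (N • (1 : Mat r)).PosDef := by
  have h := posdef_shift (0 : Mat r) (by simp [Matrix.IsSymm]) (N := N) (by simp [So_zero, hN])
  simpa using h

lemma isSymm_sum {r : ℕ} {ι : Type*} (s : Finset ι) (F : ι → Mat r) (h : ∀ i ∈ s, (F i).IsSymm) :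
    (∑ i ∈ s, F i).IsSymm := by
  unfold Matrix.IsSymm
  rw [Matrix.transpose_sum]
  exact Finset.sum_congr rfl h

noncomputable def gg {r : ℕ} (f : Mat r → ℝ) (x : Mat r) : ℝ :=
  f (x + (So x + 1) • 1) - f ((So x + 1) • 1)

section
variable {r : ℕ} {f : Mat r → ℝ}
  (hadd : ∀ x y : Mat r, x.PosDef → y.PosDef → f x + f y = f (x + y))
include hadd

lemma gg_eq {x c : Mat r} (hx : x.IsSymm) (hc : c.PosDef) (hxc : (x + c).PosDef) :
    gg f x = f (x + c) - f c := by
  have hN : So x < So x + 1 := by linarith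
  have hNpos : (0:ℝ) < So x + 1 := by have := So_nonneg x; linarith
  have h1 : (x + (So x + 1) • 1 : Mat r).PosDef := posdef_shift x hx hN
  have h2 : ((So x + 1) • (1:Mat r)).PosDef := smul_one_posdef hNpos
  have e1 := hadd _ c h1 hc
  have e2 := hadd _ _ hxc h2
  have : x + (So x + 1) • 1 + c = x + c + (So x + 1) • (1:Mat r) := by abel
  rw [this] at e1
  unfold gg
  linarith
 
lemma gg_posdef {x : Mat r} (hx : x.PosDef) : gg f x = f x := by
  have hNpos : (0:ℝ) < So x + 1 := by have := So_nonneg x; linarith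
  have := hadd x ((So x + 1) • 1) hx (smul_one_posdef hNpos)
  unfold gg
  linarith

lemma gg_add {x y : Mat r} (hx : x.IsSymm) (hy : y.IsSymm) :
    gg f (x + y) = gg f x + gg f y := by
  have hxy : (x + y).IsSymm := hx.add hy
  have hNx : (0:ℝ) < So x + 1 := by have := So_nonneg x; linarith
  have hNy : (0:ℝ) < So y + 1 := by have := So_nonneg y; linarith
  have hx1 : (x + (So x + 1) • 1 : Mat r).PosDef := posdef_shift x hx (by linarith)
  have hy1 : (y + (So y + 1) • 1 : Mat r).PosDef := posdef_shift y hy (by linarith)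
  have hxy1 : (x + y + ((So x + 1) + (So y + 1)) • 1 : Mat r).PosDef :=
    posdef_shift (x + y) hxy (by have := So_add x y; linarith)
  have h3 : gg f (x + y) = f (x + y + ((So x + 1) + (So y + 1)) • 1)
      - f (((So x + 1) + (So y + 1)) • (1 : Mat r)) :=
    gg_eq hadd hxy (smul_one_posdef (by linarith)) hxy1
  have e1 := hadd _ _ hx1 hy1
  have e2 := hadd _ _ (smul_one_posdef hNx) (smul_one_posdef hNy)
  have a1 : x + (So x + 1) • 1 + (y + (So y + 1) • 1)
      = x + y + ((So x + 1) + (So y + 1)) • (1 : Mat r) := by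
    module
  have a2 : (So x + 1) • (1 : Mat r) + (So y + 1) • 1
      = ((So x + 1) + (So y + 1)) • (1 : Mat r) := by module
  rw [a1] at e1; rw [a2] at e2
  unfold gg
  unfold gg at h3
  linarith

lemma gg_zero : gg f (0 : Mat r) = 0 := by
  have := gg_add hadd (x := 0) (y := 0) (by simp [Matrix.IsSymm]) (by simp [Matrix.IsSymm])
  simp at this
  linarith

lemma gg_sum {ι : Type*} (s : Finset ι) (F : ι → Mat r) (hF : ∀ i ∈ s, (F i).IsSymm) :
    gg f (∑ i ∈ s, F i) = ∑ i ∈ s, gg f (F i) := by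
  classical
  induction s using Finset.induction_on with
  | empty => simpa using gg_zero hadd
  | @insert a s' hnot ih =>
    rw [Finset.sum_insert hnot, Finset.sum_insert hnot,
      gg_add hadd (hF a (Finset.mem_insert_self a s'))
        (isSymm_sum s' F (fun i hi => hF i (Finset.mem_insert_of_mem hi))),
      ih (fun i hi => hF i (Finset.mem_insert_of_mem hi))]

end

lemma isSymm_smul {r : ℕ} (t : ℝ) (x : Mat r) (hx : x.IsSymm) : (t • x).IsSymm := by
  unfold Matrix.IsSymm
  rw [Matrix.transpose_smul, hx]

section
variable {r : ℕ} {f : Mat r → ℝ}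
  (hmeas : Measurable ({x : Mat r | x.PosDef}.restrict f))
  (hadd : ∀ x y : Mat r, x.PosDef → y.PosDef → f x + f y = f (x + y))
include hmeas hadd

lemma gg_smul {x : Mat r} (hx : x.IsSymm) (t : ℝ) : gg f (t • x) = t * gg f x := by
  set h : ℝ → ℝ := fun t => gg f (t • x) with hh
  have hrepr : ∀ s : ℝ, h s = f (s • x + (|s| * So x + 1) • 1) - f ((|s| * So x + 1) • 1) := by
    intro s
    simp only [hh, gg, So_smul]
  have pf1 : ∀ s : ℝ, (s • x + (|s| * So x + 1) • (1 : Mat r)).PosDef := by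
    intro s
    exact posdef_shift (s • x) (isSymm_smul s x hx) (by rw [So_smul]; linarith)

  have pf2 : ∀ s : ℝ, ((|s| * So x + 1) • (1 : Mat r)).PosDef := by
    intro s
    exact smul_one_posdef (by
      have := mul_nonneg (abs_nonneg s) (So_nonneg x); linarith)
  have habs : Measurable fun s : ℝ => |s| := continuous_abs.measurable
  have base1 : Measurable fun s : ℝ => (s • x + (|s| * So x + 1) • (1 : Mat r)) := by
    apply measurable_pi_lambda
    intro i
    apply measurable_pi_lambda
    intro j
    have : (fun s : ℝ => (s • x + (|s| * So x + 1) • (1 : Mat r)) i j)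
        = fun s : ℝ => s * x i j + (|s| * So x + 1) * (1 : Mat r) i j := by
      funext s
      simp [Matrix.add_apply, Matrix.smul_apply, smul_eq_mul]
    rw [this]
    exact (measurable_id.mul_const _).add (((habs.mul_const _).add_const 1).mul_const _)
  have base2 : Measurable fun s : ℝ => ((|s| * So x + 1) • (1 : Mat r)) := by
    apply measurable_pi_lambda
    intro i
    apply measurable_pi_lambda
    intro j
    have : (fun s : ℝ => ((|s| * So x + 1) • (1 : Mat r)) i j)
        = fun s : ℝ => (|s| * So x + 1) * (1 : Mat r) i j := by
      funext s
      simp [Matrix.smul_apply, smul_eq_mul]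
    rw [this]
    exact ((habs.mul_const _).add_const 1).mul_const _
  have hm : Measurable h := by
    have : h = fun s : ℝ =>
        ({x : Mat r | x.PosDef}.restrict f) ⟨_, pf1 s⟩
          - ({x : Mat r | x.PosDef}.restrict f) ⟨_, pf2 s⟩ := by
      funext s
      exact hrepr s
    rw [this]
    exact (hmeas.comp (base1.subtype_mk)).sub (hmeas.comp (base2.subtype_mk))
  have hadditive : ∀ a b : ℝ, h (a + b) = h a + h b := by
    intro a b
    simp only [hh]
    rw [add_smul]
    exact gg_add hadd (isSymm_smul a x hx) (isSymm_smul b x hx)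
  have := cauchy1D h hm hadditive t
  simpa [hh] using this

end

lemma stdBasis_transpose {r : ℕ} (i j : Fin r) :
    (single i j (1:ℝ))ᵀ = single j i 1 := by
  ext a b
  simp [Matrix.single, and_comm]

lemma decomp {r : ℕ} (x : Mat r) (hx : x.IsSymm) :
    x = ∑ i, ∑ j, x i j • ((2⁻¹ : ℝ) • (single i j (1:ℝ) + single j i 1)) := by
  ext k l
  simp only [Matrix.sum_apply, Matrix.smul_apply, Matrix.add_apply, smul_eq_mul]
  have hstd : ∀ a b c d : Fin r, single a b (1:ℝ) c d = if a = c ∧ b = d then 1 else 0 :=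
    fun a b c d => rfl
  simp only [hstd, mul_ite, mul_one, mul_zero, ite_and, mul_add]
  rw [Finset.sum_comm]
  simp only [Finset.sum_add_distrib, Finset.sum_ite_eq, Finset.sum_ite_eq', Finset.mem_univ,
    if_true, Finset.sum_ite_irrel, Finset.sum_const_zero]
  rw [hx.apply k l]
  ring


/-- **Additive Cauchy equation on the cone `Ω₊`.** A measurable function on `Ω₊` satisfying
`f(x) + f(y) = f(x+y)` is of the form `f(x) = ⟨c, x⟩ = tr(c x)` for some symmetric `c`. -/
theorem additive_cauchy_on_cone {r : ℕ} (hr : 1 ≤ r) (f : Mat r → ℝ)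
    (hmeas : Measurable ({x : Mat r | x.PosDef}.restrict f))
    (hadd : ∀ x y : Mat r, x.PosDef → y.PosDef → f x + f y = f (x + y)) :
    ∃ c : Mat r, c.IsSymm ∧ ∀ x : Mat r, x.PosDef → f x = (c * x).trace := by
  classical
  set B : Fin r → Fin r → Mat r :=
    fun i j => (2⁻¹ : ℝ) • (single i j (1:ℝ) + single j i 1) with hB
  have hBsymm : ∀ i j, (B i j).IsSymm := by
    intro i j
    unfold Matrix.IsSymm
    rw [hB]
    simp only [Matrix.transpose_smul, Matrix.transpose_add]
    rw [stdBasis_transpose, stdBasis_transpose]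
    rw [add_comm]
  have hBcomm : ∀ i j, B i j = B j i := by
    intro i j
    simp only [hB]
    rw [add_comm]
  refine ⟨Matrix.of fun i j => gg f (B i j), ?_, ?_⟩
  · unfold Matrix.IsSymm
    ext i j
    simp only [Matrix.transpose_apply, Matrix.of_apply]
    rw [hBcomm]
  · intro x hx
    have hxs : x.IsSymm := by
      have h1 := hx.1
      unfold Matrix.IsHermitian at h1
      rwa [Matrix.conjTranspose_eq_transpose_of_trivial] at h1
    have hsum : gg f x = ∑ i, ∑ j, x i j * gg f (B i j) := by
      conv_lhs => rw [decomp x hxs]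
      change gg f (∑ i, ∑ j, x i j • B i j) = _
      rw [gg_sum hadd Finset.univ (fun i => ∑ j, x i j • B i j) (fun i _ => isSymm_sum _ _
        (fun j _ => isSymm_smul _ _ (hBsymm i j)))]
      refine Finset.sum_congr rfl fun i _ => ?_
      rw [gg_sum hadd Finset.univ (fun j => x i j • B i j) (fun j _ => isSymm_smul _ _ (hBsymm i j))]
      exact Finset.sum_congr rfl fun j _ => gg_smul hmeas hadd (hBsymm i j) (x i j)
    have hfx : f x = gg f x := (gg_posdef hadd hx).symm
    rw [hfx, hsum]
    rw [Matrix.trace]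
    simp only [Matrix.diag_apply, Matrix.mul_apply, Matrix.of_apply]
    rw [Finset.sum_comm]
    refine Finset.sum_congr rfl fun i _ => Finset.sum_congr rfl fun j _ => ?_
    rw [hxs.apply i j, hBcomm j i]
    ring
end

section
/- Let c ∈ Ω_+ satisfy ⟨c, P(u)v²⟩ = ⟨c, P(v)u²⟩ for all u, v ∈ Ω_+. Then there exists λ > 0 such that c = λ·e. -/
open Matrix

private theorem tr_std_aux {r : ℕ} (c : Mat r) (k l : Fin r) :
    (c * single k l (1:ℝ)).trace = c l k := by
  simp only [Matrix.trace, Matrix.diag, Matrix.mul_apply, Matrix.single, of_apply,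
    mul_ite, mul_one, mul_zero, ite_and]
  rw [Finset.sum_comm]
  simp

private theorem shiftPD_aux {r : ℕ} (a : Mat r) (ha : a.IsHermitian) :
    ∃ μ : ℝ, 0 < μ ∧ (μ • (1 : Mat r) + a).PosDef := by
  set S : ℝ := ∑ i : Fin r, ∑ j : Fin r, |a i j| with hS
  have hS0 : 0 ≤ S := Finset.sum_nonneg fun i _ => Finset.sum_nonneg fun j _ => abs_nonneg _
  refine ⟨S + 1, by linarith, Matrix.PosDef.of_dotProduct_mulVec_pos ?_ fun x hx => ?_⟩
  · have h1 : ((S+1) • (1 : Mat r)).IsHermitian := by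
      unfold Matrix.IsHermitian
      rw [conjTranspose_smul]
      simp
    exact h1.add ha
  · have hsx : star x = x := by funext i; simp
    rw [hsx, add_mulVec, dotProduct_add, smul_mulVec, one_mulVec, dotProduct_smul]
    set N : ℝ := x ⬝ᵥ x with hN
    have hNi : ∀ i, x i ^ 2 ≤ N := by
      intro i
      rw [hN, dotProduct]
      calc x i ^ 2 = x i * x i := sq (x i) ▸ by ring
      _ ≤ ∑ j, x j * x j := Finset.single_le_sum (f := fun j => x j * x j)
          (fun j _ => mul_self_nonneg _) (Finset.mem_univ i)
    have hNpos : 0 < N := by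
      obtain ⟨i, hi⟩ := Function.ne_iff.mp hx
      rw [hN, dotProduct]
      exact Finset.sum_pos' (fun j _ => mul_self_nonneg _)
        ⟨i, Finset.mem_univ i, mul_self_pos.mpr hi⟩
    have hbound : |x ⬝ᵥ a *ᵥ x| ≤ S * N := by
      rw [dotProduct, hS, Finset.sum_mul]
      calc |∑ i, x i * (a *ᵥ x) i| ≤ ∑ i, |x i * (a *ᵥ x) i| := Finset.abs_sum_le_sum_abs _ _
      _ ≤ ∑ i, ∑ j, |a i j| * N := by
          refine Finset.sum_le_sum fun i _ => ?_
          rw [mulVec, dotProduct, Finset.mul_sum]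
          calc |∑ j, x i * (a i j * x j)| ≤ ∑ j, |x i * (a i j * x j)| :=
                Finset.abs_sum_le_sum_abs _ _
          _ ≤ ∑ j, |a i j| * N := by
              refine Finset.sum_le_sum fun j _ => ?_
              rw [abs_mul, abs_mul, ← mul_assoc, mul_comm |x i| |a i j|, mul_assoc]
              refine mul_le_mul_of_nonneg_left ?_ (abs_nonneg _)
              have h2 : 2 * |x i| * |x j| ≤ |x i|^2 + |x j|^2 := two_mul_le_add_sq _ _
              rw [sq_abs, sq_abs] at h2
              nlinarith [hNi i, hNi j]
      _ = ∑ i, (∑ j, |a i j|) * N := by simp [Finset.sum_mul]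
    have habs := abs_le.mp hbound
    rw [smul_eq_mul]
    nlinarith [habs.1]

/-- **If `c ∈ Ω₊` satisfies `⟨c, P(u)v²⟩ = ⟨c, P(v)u²⟩` for all `u, v ∈ Ω₊`, then `c` is a
positive multiple of the identity.**  Here `⟨a,b⟩ = tr(ab)` and `P(u)x = u x u`. -/
theorem multiple_of_identity {r : ℕ} (hr : 1 ≤ r) (c : Mat r) (hc : c.PosDef)
    (h : ∀ u v : Mat r, u.PosDef → v.PosDef →
      (c * (u * (v * v) * u)).trace = (c * (v * (u * u) * v)).trace) :
    ∃ lam : ℝ, 0 < lam ∧ c = lam • (1 : Mat r) := by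
  -- Step 1: a bilinear identity for positive definite matrices
  have key1 : ∀ a v : Mat r, a.PosDef → v.PosDef →
      (c * (a * (v * v))).trace + (c * (v * (v * a))).trace
        = 2 * (c * (v * (a * v))).trace := by
    intro a v hA hv
    have pd1 : (1 + a : Mat r).PosDef := Matrix.PosDef.one.add hA
    have pd2 : (1 + a + a : Mat r).PosDef := pd1.add hA
    have e1 := h (1 + a) v pd1 hv
    have e2 := h (1 + a + a) v pd2 hv
    simp only [Matrix.mul_add, Matrix.add_mul, Matrix.mul_one, Matrix.one_mul,
      Matrix.trace_add, mul_assoc] at e1 e2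
    linarith [e1, e2]
  -- Step 2: extend to all symmetric (Hermitian) matrices via positive shifts
  have key2 : ∀ a v : Mat r, a.IsHermitian → v.IsHermitian →
      (c * (a * (v * v))).trace + (c * (v * (v * a))).trace
        = 2 * (c * (v * (a * v))).trace := by
    intro a v ha hv
    obtain ⟨μ, hμ, hA⟩ := shiftPD_aux a ha
    obtain ⟨ν, hν, hV⟩ := shiftPD_aux v hv
    have k := key1 _ _ hA hV
    simp only [Matrix.mul_add, Matrix.add_mul, Matrix.mul_one, Matrix.one_mul,
      Matrix.smul_mul, Matrix.mul_smul, Matrix.trace_add, Matrix.trace_smul, smul_smul,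
      smul_eq_mul, mul_assoc, one_mul, mul_one, smul_add] at k
    ring_nf at k
    linarith [k]
  -- symmetry of c
  have hsym' : ∀ k l, c k l = c l k := fun k l => by
    conv_lhs => rw [← hc.1.eq]
    simp [conjTranspose_apply]
  -- Hermitian basis matrices
  have h1 : ∀ i : Fin r, (single i i (1:ℝ)).IsHermitian := by
    intro i
    ext k l; simp [conjTranspose_apply, Matrix.single, and_comm]
  have h2 : ∀ i j : Fin r, (single i j (1:ℝ) + single j i 1).IsHermitian := by
    intro i j
    unfold Matrix.IsHermitian
    rw [conjTranspose_add]
    have e1 : (single i j (1:ℝ))ᴴ = single j i 1 := by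
      ext k l; simp [conjTranspose_apply, Matrix.single, and_comm]
    have e2 : (single j i (1:ℝ))ᴴ = single i j 1 := by
      ext k l; simp [conjTranspose_apply, Matrix.single, and_comm]
    rw [e1, e2, add_comm]
  -- Step 3: off-diagonal entries vanish
  have offdiag : ∀ i j : Fin r, i ≠ j → c i j = 0 := by
    intro i j hij
    have k := key2 _ _ (h2 i j) (h1 i)
    simp only [Matrix.mul_add, Matrix.add_mul, Matrix.trace_add] at k
    simp [Matrix.single_mul_single_same, Matrix.single_mul_single_of_ne, hij, hij.symm,
      tr_std_aux] at k
    have := hsym' i j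
    linarith [k]
  -- Step 4: all diagonal entries are equal
  have diagEq : ∀ i j : Fin r, i ≠ j → c i i = c j j := by
    intro i j hij
    have k := key2 _ _ (h1 i) (h2 i j)
    simp only [Matrix.mul_add, Matrix.add_mul, Matrix.trace_add] at k
    simp [Matrix.single_mul_single_same, Matrix.single_mul_single_of_ne, hij, hij.symm,
      tr_std_aux] at k
    linarith [k]
  -- conclude
  set i0 : Fin r := ⟨0, hr⟩ with hi0
  refine ⟨c i0 i0, ?_, ?_⟩
  · have hx : (Pi.single i0 1 : Fin r → ℝ) ≠ 0 := by
      intro hcontra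
      have := congrFun hcontra i0
      simp at this
    have := hc.dotProduct_mulVec_pos hx
    have hval : star (Pi.single i0 1 : Fin r → ℝ) ⬝ᵥ c *ᵥ (Pi.single i0 1 : Fin r → ℝ) = c i0 i0 := by
      have hsx : star (Pi.single i0 1 : Fin r → ℝ) = Pi.single i0 1 := by funext k; simp
      rw [hsx]
      simp [dotProduct, mulVec, Pi.single_apply]
    rwa [hval] at this
  · ext i j
    by_cases hij : i = j
    · subst hij
      by_cases hi : i = i0
      · subst hi
        simp [Matrix.one_apply]
      · rw [diagEq i i0 hi]
        simp [Matrix.one_apply]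
    · rw [offdiag i j hij]
      simp [Matrix.one_apply, hij]
end

section
/- Let a, b, c, d : (0,∞) → ℝ be continuous functions such that a(x) + b(y) = c(y/(1+x)) + d(x(1 + y/(1+x))) for all x, y ∈ (0,∞). Then there exist constants α, β, γ, δ ∈ ℝ and c₁, c₂, c₃, c₄ ∈ ℝ with c₁ + c₂ = c₃ + c₄ such that for all x > 0: a(x) = β·log x − γ·x − α·log(1+x) + c₁, b(x) = α·log x − δ·x + c₂, c(x) = α·log x − δ·x − β·log(1+x) + c₃, and d(x) = β·log x − γ·x + c₄. -/
open Set Filter Topology Real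

private lemma tendsto_comp_pos {α : Type*} {f : ℝ → ℝ} (hf : ContinuousOn f (Set.Ioi 0)) {z : ℝ}
    (hz : 0 < z) {l : Filter α} {g : α → ℝ} (hg : Filter.Tendsto g l (𝓝 z))
    (hpos : ∀ᶠ t in l, g t ∈ Set.Ioi (0:ℝ)) :
    Filter.Tendsto (fun t => f (g t)) l (𝓝 (f z)) := by
  have h1 : Filter.Tendsto g l (𝓝[Set.Ioi 0] z) := tendsto_nhdsWithin_iff.mpr ⟨hg, hpos⟩
  exact (hf z hz).tendsto.comp h1

private lemma aux_linear (f : ℝ → ℝ) (hc : ContinuousOn f (Set.Ioi 0))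
    (hadd : ∀ s t : ℝ, 0 < s → 0 < t → f (s + t) = f s + f t) :
    ∀ x : ℝ, 0 < x → f x = f 1 * x := by
  set g : ℝ → ℝ := fun x => f x - f 1 * x with hg
  have gadd : ∀ s t : ℝ, 0 < s → 0 < t → g (s + t) = g s + g t := by
    intro s t hs ht
    simp only [hg, hadd s t hs ht]; ring
  have g1 : g 1 = 0 := by simp [hg]
  have gnat : ∀ n : ℕ, ∀ x : ℝ, 0 < x → g ((n + 1) * x) = (n + 1) * g x := by
    intro n
    induction n with
    | zero => intro x hx; simp
    | succ n ih =>
      intro x hx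
      push_cast
      have h1 : ((n:ℝ) + 1 + 1) * x = ((n:ℝ) + 1) * x + x := by ring
      have ih' := ih x hx
      push_cast at ih'
      rw [h1, gadd _ _ (by positivity) hx, ih']
      ring
  have gq : ∀ q : ℚ, 0 < q → g (q : ℝ) = 0 := by
    intro q hq
    have hden : (0:ℝ) < (q.den : ℝ) := by exact_mod_cast q.pos
    have hnum : (0:ℝ) < (q.num : ℝ) := by exact_mod_cast Rat.num_pos.mpr hq
    have hqR : (0:ℝ) < (q:ℝ) := by exact_mod_cast hq
    -- (q.den) * q = q.num
    have key : ((q.den : ℝ)) * (q : ℝ) = (q.num : ℝ) := by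
      rw [Rat.cast_def]; field_simp
    obtain ⟨m, hm⟩ : ∃ m : ℕ, q.den = m + 1 := ⟨q.den - 1, by have := q.pos; omega⟩
    obtain ⟨n, hn⟩ : ∃ n : ℕ, q.num = (n : ℤ) + 1 := by
      have : 0 < q.num := Rat.num_pos.mpr hq
      exact ⟨(q.num - 1).toNat, by omega⟩
    have e1 : g ((q.den : ℝ) * (q:ℝ)) = (q.den : ℝ) * g (q:ℝ) := by
      rw [hm]; push_cast; exact gnat m _ hqR
    have e2 : g ((q.num : ℝ)) = (q.num : ℝ) * g 1 := by
      have : ((q.num : ℝ)) = ((n:ℝ) + 1) * 1 := by rw [hn]; push_cast; ring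
      rw [this]
      have := gnat n 1 one_pos
      push_cast at this ⊢
      rw [this]; ring
    rw [key] at e1
    rw [g1, mul_zero] at e2
    have : (q.den : ℝ) * g (q:ℝ) = 0 := by rw [← e1, e2]
    exact (mul_eq_zero.mp this).resolve_left (ne_of_gt hden)
  have gcont : ContinuousOn g (Set.Ioi 0) :=
    hc.sub ((continuous_const.mul continuous_id).continuousOn)
  have gz : Filter.Tendsto g (𝓝[>] (0:ℝ)) (𝓝 0) := by
    have key : ∀ t : ℝ, 0 < t → g (1 + t) = g t := by
      intro t ht; rw [gadd 1 t one_pos ht, g1, zero_add]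
    have h1 : Filter.Tendsto (fun t : ℝ => 1 + t) (𝓝[>] (0:ℝ)) (𝓝 (1:ℝ)) := by
      have : Filter.Tendsto (fun t : ℝ => 1 + t) (𝓝 (0:ℝ)) (𝓝 (1:ℝ)) := by
        exact (continuous_const.add continuous_id).tendsto' (0:ℝ) 1 (by simp)
      exact this.mono_left nhdsWithin_le_nhds
    have h2 : Filter.Tendsto (fun t : ℝ => g (1 + t)) (𝓝[>] (0:ℝ)) (𝓝 0) := by
      have := tendsto_comp_pos gcont one_pos h1
        (by filter_upwards [self_mem_nhdsWithin] with t ht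
            exact Set.mem_Ioi.mpr (by have : (0:ℝ) < t := ht; linarith))
      rwa [g1] at this
    refine h2.congr' ?_
    filter_upwards [self_mem_nhdsWithin] with t ht
    exact key t ht
  intro x hx
  have main : ∀ ε : ℝ, 0 < ε → |g x| ≤ ε := by
    intro ε hε
    rw [Metric.tendsto_nhdsWithin_nhds] at gz
    obtain ⟨η, hη, hball⟩ := gz ε hε
    obtain ⟨q, hq1, hq2⟩ := exists_rat_btwn (show max (x - η) (x / 2) < x by
      apply max_lt <;> linarith)
    have hq0 : (0:ℝ) < q := by have h := le_max_right (x - η) (x/2); linarith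
    have hs : 0 < x - q := by linarith
    have hsη : x - q < η := by
      have : x - η ≤ max (x - η) (x/2) := le_max_left _ _
      linarith
    have hgx : g x = g (x - q) := by
      have : g ((q:ℝ) + (x - q)) = g q + g (x - q) := gadd _ _ hq0 hs
      rw [gq q (by exact_mod_cast hq0)] at this
      simpa using this
    rw [hgx]
    have := hball (Set.mem_Ioi.mpr hs) (by
      rw [Real.dist_eq]; rw [sub_zero]; rw [abs_of_pos hs]; exact hsη)
    rw [Real.dist_eq, sub_zero] at this
    exact this.le
  have : |g x| ≤ 0 := by
    by_contra h
    push_neg at h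
    have := main (|g x| / 2) (by linarith)
    linarith
  have : g x = 0 := abs_eq_zero.mp (le_antisymm this (abs_nonneg _))
  simp only [hg] at this
  linarith

private lemma tendsto_mul_pos_nhdsWithin {σ : ℝ} (hσ : 0 < σ) :
    Filter.Tendsto (fun v : ℝ => σ * v) (𝓝[>] (0:ℝ)) (𝓝[>] (0:ℝ)) := by
  apply tendsto_nhdsWithin_iff.mpr
  constructor
  · have h : Filter.Tendsto (fun v : ℝ => σ * v) (𝓝 (0:ℝ)) (𝓝 (σ * 0)) :=
      (continuous_const.mul continuous_id).tendsto (0:ℝ)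
    simp only [mul_zero] at h
    exact h.mono_left nhdsWithin_le_nhds
  · filter_upwards [self_mem_nhdsWithin] with v hv
    exact Set.mem_Ioi.mpr (mul_pos hσ hv)

private lemma ratio_limit_exists (b e E : ℝ → ℝ) (he : ContinuousOn e (Set.Ioi 0))
    (hE : ContinuousOn E (Set.Ioi (1/2 : ℝ)))
    (key : ∀ ρ : ℝ, 1/2 < ρ → ∀ v : ℝ, 0 < v →
      b (ρ * v) - b v = e ((2*ρ - 1) * (1 + v/2)) - e (1 + v/2) + E ρ) :
    ∃ α : ℝ, ∀ ρ : ℝ, 0 < ρ →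
      Filter.Tendsto (fun v => b (ρ * v) - b v) (𝓝[>] (0:ℝ)) (𝓝 (α * Real.log ρ)) := by
  set Λ : ℝ → ℝ := fun ρ => e (2*ρ - 1) - e 1 + E ρ with hΛdef
  have hΛ : ∀ ρ : ℝ, 1/2 < ρ →
      Filter.Tendsto (fun v => b (ρ * v) - b v) (𝓝[>] (0:ℝ)) (𝓝 (Λ ρ)) := by
    intro ρ hρ
    have hρ0 : 0 < 2*ρ - 1 := by linarith
    have inner1 : Filter.Tendsto (fun v : ℝ => (2*ρ - 1) * (1 + v/2)) (𝓝[>] (0:ℝ))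
        (𝓝 (2*ρ - 1)) := by
      have : Filter.Tendsto (fun v : ℝ => (2*ρ - 1) * (1 + v/2)) (𝓝 (0:ℝ))
          (𝓝 ((2*ρ - 1) * (1 + 0/2))) :=
        (continuous_const.mul (continuous_const.add (continuous_id.div_const 2))).tendsto 0
      simp only [zero_div, add_zero, mul_one] at this
      exact this.mono_left nhdsWithin_le_nhds
    have inner2 : Filter.Tendsto (fun v : ℝ => 1 + v/2) (𝓝[>] (0:ℝ)) (𝓝 (1:ℝ)) := by
      have : Filter.Tendsto (fun v : ℝ => 1 + v/2) (𝓝 (0:ℝ)) (𝓝 (1 + 0/2)) :=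
        (continuous_const.add (continuous_id.div_const 2)).tendsto 0
      simp only [zero_div, add_zero] at this
      exact this.mono_left nhdsWithin_le_nhds
    have t1 := tendsto_comp_pos he hρ0 inner1
      (by filter_upwards [self_mem_nhdsWithin] with v hv
          have : (0:ℝ) < v := hv
          exact Set.mem_Ioi.mpr (by positivity))
    have t2 := tendsto_comp_pos he one_pos inner2
      (by filter_upwards [self_mem_nhdsWithin] with v hv
          have : (0:ℝ) < v := hv
          exact Set.mem_Ioi.mpr (by positivity))
    have comb := (t1.sub t2).add_const (E ρ)
    refine comb.congr' ?_
    filter_upwards [self_mem_nhdsWithin] with v hv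
    exact (key ρ hρ v hv).symm
  have hΛadd : ∀ ρ σ : ℝ, 1 < ρ → 1 < σ → Λ (ρ*σ) = Λ ρ + Λ σ := by
    intro ρ σ hρ hσ
    have hσ0 : (0:ℝ) < σ := by linarith
    have A := (hΛ ρ (by linarith)).comp (tendsto_mul_pos_nhdsWithin hσ0)
    have B := hΛ σ (by linarith)
    have AB := A.add B
    have : Filter.Tendsto (fun v => b (ρ*σ*v) - b v) (𝓝[>] (0:ℝ)) (𝓝 (Λ ρ + Λ σ)) := by
      refine AB.congr ?_
      intro v
      simp only [Function.comp]
      rw [← mul_assoc]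
      ring
    exact tendsto_nhds_unique (hΛ (ρ*σ) (by nlinarith)) this
  have hΛc : ContinuousOn Λ (Set.Ioi (1/2 : ℝ)) := by
    apply ContinuousOn.add
    · apply ContinuousOn.sub
      · exact he.comp ((continuous_const.mul continuous_id).sub continuous_const).continuousOn
          (fun ρ hρ => by
            have : (1/2:ℝ) < ρ := hρ
            exact Set.mem_Ioi.mpr (by show (0:ℝ) < 2*ρ - 1; linarith))
      · exact continuousOn_const
    · exact hE
  set f : ℝ → ℝ := fun t => Λ (Real.exp t) with hfdef
  have fc : ContinuousOn f (Set.Ioi 0) := by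
    apply hΛc.comp continuous_exp.continuousOn
    intro t ht
    have : (0:ℝ) < t := ht
    have h1 : (1:ℝ) < Real.exp t := by
      have := Real.exp_lt_exp.mpr this
      simpa using this
    exact Set.mem_Ioi.mpr (by linarith)
  have fadd : ∀ s t : ℝ, 0 < s → 0 < t → f (s + t) = f s + f t := by
    intro s t hs ht
    have hes : (1:ℝ) < Real.exp s := by have := Real.exp_lt_exp.mpr hs; simpa using this
    have het : (1:ℝ) < Real.exp t := by have := Real.exp_lt_exp.mpr ht; simpa using this
    show Λ (Real.exp (s+t)) = Λ (Real.exp s) + Λ (Real.exp t)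
    rw [Real.exp_add]
    exact hΛadd _ _ hes het
  have flin := aux_linear f fc fadd
  refine ⟨f 1, ?_⟩
  have main : ∀ ρ : ℝ, 1 < ρ →
      Filter.Tendsto (fun v => b (ρ * v) - b v) (𝓝[>] (0:ℝ)) (𝓝 (f 1 * Real.log ρ)) := by
    intro ρ hρ
    have hlρ : 0 < Real.log ρ := Real.log_pos hρ
    have : Λ ρ = f 1 * Real.log ρ := by
      have := flin (Real.log ρ) hlρ
      simp only [hfdef] at this ⊢
      rwa [Real.exp_log (by linarith : (0:ℝ) < ρ)] at this
    rw [← this]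
    exact hΛ ρ (by linarith)
  intro ρ hρ
  rcases lt_trichotomy ρ 1 with hlt | heq1 | hgt
  · have hinv : 1 < 1/ρ := by rw [lt_div_iff₀ hρ]; linarith
    have A := (main (1/ρ) hinv).comp (tendsto_mul_pos_nhdsWithin hρ)
    have B := A.neg
    have hval : -(f 1 * Real.log (1/ρ)) = f 1 * Real.log ρ := by
      rw [one_div, Real.log_inv]; ring
    rw [hval] at B
    refine B.congr ?_
    intro v
    simp only [Function.comp]
    have : (1/ρ) * (ρ * v) = v := by field_simp
    rw [this]; ring
  · subst heq1
    simp only [Real.log_one, mul_zero, one_mul, sub_self]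
    exact tendsto_const_nhds
  · exact main ρ hgt

/-- **The one-dimensional functional equation** `a(x) + b(y) = c(y/(1+x)) + d(x(1+y/(1+x)))`
for continuous functions on `(0,∞)` has only the stated log-linear solutions. -/
theorem one_dim_functional_equation (a b c d : ℝ → ℝ)
    (hca : ContinuousOn a (Ioi 0)) (hcb : ContinuousOn b (Ioi 0))
    (hcc : ContinuousOn c (Ioi 0)) (hcd : ContinuousOn d (Ioi 0))
    (heq : ∀ x ∈ Ioi (0 : ℝ), ∀ y ∈ Ioi (0 : ℝ),
      a x + b y = c (y / (1 + x)) + d (x * (1 + y / (1 + x)))) :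
    ∃ α β γ δ c₁ c₂ c₃ c₄ : ℝ, c₁ + c₂ = c₃ + c₄ ∧
      ∀ x ∈ Ioi (0 : ℝ),
        a x = β * Real.log x - γ * x - α * Real.log (1 + x) + c₁ ∧
        b x = α * Real.log x - δ * x + c₂ ∧
        c x = α * Real.log x - δ * x - β * Real.log (1 + x) + c₃ ∧
        d x = β * Real.log x - γ * x + c₄ := by
  -- Reduced equation E'
  have heq' : ∀ x : ℝ, 0 < x → ∀ u : ℝ, 0 < u →
      a x + b (u * (1 + x)) = c u + d (x * (1 + u)) := by
    intro x hx u hu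
    have h1x : (1 + x) ≠ 0 := by positivity
    have hy : (0:ℝ) < u * (1 + x) := by positivity
    have h := heq x (mem_Ioi.mpr hx) (u * (1 + x)) (mem_Ioi.mpr hy)
    rw [mul_div_cancel_right₀ u h1x] at h
    exact h
  -- ratio limits for b
  obtain ⟨α, hαlim⟩ := ratio_limit_exists b d (fun ρ => a 1 - a (2*ρ - 1)) hcd
    (continuousOn_const.sub (hca.comp
      ((continuous_const.mul continuous_id).sub continuous_const).continuousOn
      (fun ρ hρ => by
        have : (1/2:ℝ) < ρ := hρ
        exact Set.mem_Ioi.mpr (by show (0:ℝ) < 2*ρ - 1; linarith))))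
    (by
      intro ρ hρ v hv
      have h1 := heq' (2*ρ - 1) (by linarith) (v/2) (by linarith)
      have h2 := heq' 1 one_pos (v/2) (by linarith)
      rw [show (v/2) * (1 + (2*ρ - 1)) = ρ * v from by ring] at h1
      rw [show (v/2) * (1 + 1) = v from by ring, show (1:ℝ) * (1 + v/2) = 1 + v/2 from by ring] at h2
      linarith)
  -- ratio limits for d
  obtain ⟨β, hβlim⟩ := ratio_limit_exists d b (fun ρ => c 1 - c (2*ρ - 1)) hcb
    (continuousOn_const.sub (hcc.comp
      ((continuous_const.mul continuous_id).sub continuous_const).continuousOn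
      (fun ρ hρ => by
        have : (1/2:ℝ) < ρ := hρ
        exact Set.mem_Ioi.mpr (by show (0:ℝ) < 2*ρ - 1; linarith))))
    (by
      intro ρ hρ v hv
      have h1 := heq' (v/2) (by linarith) (2*ρ - 1) (by linarith)
      have h2 := heq' (v/2) (by linarith) 1 one_pos
      rw [show (v/2) * (1 + (2*ρ - 1)) = ρ * v from by ring] at h1
      rw [show (1:ℝ) * (1 + v/2) = 1 + v/2 from by ring,
        show (v/2) * (1 + 1) = v from by ring] at h2
      linarith)
  -- REL1 : limits of c - b near 0
  have hcb_lim : ∀ x : ℝ, 0 < x → Filter.Tendsto (fun u => c u - b u) (𝓝[>] (0:ℝ))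
      (𝓝 (a x - d x + α * Real.log (1 + x))) := by
    intro x hx
    have hb := hαlim (1 + x) (by positivity)
    have hdin : Filter.Tendsto (fun u : ℝ => x * (1 + u)) (𝓝[>] (0:ℝ)) (𝓝 x) := by
      have : Filter.Tendsto (fun u : ℝ => x * (1 + u)) (𝓝 (0:ℝ)) (𝓝 (x * (1 + 0))) :=
        (continuous_const.mul (continuous_const.add continuous_id)).tendsto 0
      simp only [add_zero, mul_one] at this
      exact this.mono_left nhdsWithin_le_nhds
    have hd := tendsto_comp_pos hcd hx hdin
      (by filter_upwards [self_mem_nhdsWithin] with u hu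
          have : (0:ℝ) < u := hu
          exact Set.mem_Ioi.mpr (by positivity))
    have comb := (hb.const_add (a x)).sub hd
    have : a x + α * Real.log (1 + x) - d x = a x - d x + α * Real.log (1 + x) := by ring
    rw [this] at comb
    refine comb.congr' ?_
    filter_upwards [self_mem_nhdsWithin] with u hu
    have hu0 : (0:ℝ) < u := hu
    have h := heq' x hx u hu0
    rw [show u * (1 + x) = (1 + x) * u from by ring] at h
    linarith
  set κ₁ : ℝ := a 1 - d 1 + α * Real.log 2 with hκ₁def
  have hk1 : ∀ x : ℝ, 0 < x → a x = d x - α * Real.log (1 + x) + κ₁ := by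
    intro x hx
    have h := tendsto_nhds_unique (hcb_lim x hx) (hcb_lim 1 one_pos)
    rw [show (1:ℝ) + 1 = 2 from by norm_num] at h
    rw [hκ₁def]; linarith
  have hκlim : Filter.Tendsto (fun u => c u - b u) (𝓝[>] (0:ℝ)) (𝓝 κ₁) := by
    have h := hcb_lim 1 one_pos
    rw [show (1:ℝ) + 1 = 2 from by norm_num] at h
    exact h
  -- REL2 : limits of a - d near 0
  have hda_lim : ∀ u : ℝ, 0 < u → Filter.Tendsto (fun x => a x - d x) (𝓝[>] (0:ℝ))
      (𝓝 (c u - b u + β * Real.log (1 + u))) := by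
    intro u hu
    have hd := hβlim (1 + u) (by positivity)
    have hbin : Filter.Tendsto (fun x : ℝ => u * (1 + x)) (𝓝[>] (0:ℝ)) (𝓝 u) := by
      have : Filter.Tendsto (fun x : ℝ => u * (1 + x)) (𝓝 (0:ℝ)) (𝓝 (u * (1 + 0))) :=
        (continuous_const.mul (continuous_const.add continuous_id)).tendsto 0
      simp only [add_zero, mul_one] at this
      exact this.mono_left nhdsWithin_le_nhds
    have hb := tendsto_comp_pos hcb hu hbin
      (by filter_upwards [self_mem_nhdsWithin] with x hx
          have : (0:ℝ) < x := hx
          exact Set.mem_Ioi.mpr (by positivity))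
    have comb := (hd.const_add (c u)).sub hb
    have : c u + β * Real.log (1 + u) - b u = c u - b u + β * Real.log (1 + u) := by ring
    rw [this] at comb
    refine comb.congr' ?_
    filter_upwards [self_mem_nhdsWithin] with x hx
    have hx0 : (0:ℝ) < x := hx
    have h := heq' x hx0 u hu
    rw [show x * (1 + u) = (1 + u) * x from by ring] at h
    linarith
  set κ₂ : ℝ := c 1 - b 1 + β * Real.log 2 with hκ₂def
  have hk2 : ∀ u : ℝ, 0 < u → c u = b u - β * Real.log (1 + u) + κ₂ := by
    intro u hu
    have h := tendsto_nhds_unique (hda_lim u hu) (hda_lim 1 one_pos)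
    rw [show (1:ℝ) + 1 = 2 from by norm_num] at h
    rw [hκ₂def]; linarith
  -- κ₁ = κ₂
  have hκκ : κ₁ = κ₂ := by
    have h2 : Filter.Tendsto (fun u => c u - b u) (𝓝[>] (0:ℝ)) (𝓝 κ₂) := by
      have hlog : Filter.Tendsto (fun u : ℝ => κ₂ - β * Real.log (1 + u)) (𝓝[>] (0:ℝ))
          (𝓝 (κ₂ - β * Real.log 1)) := by
        have hc : Filter.Tendsto (fun u : ℝ => 1 + u) (𝓝 (0:ℝ)) (𝓝 (1:ℝ)) := by
          have : Filter.Tendsto (fun u : ℝ => 1 + u) (𝓝 (0:ℝ)) (𝓝 (1 + 0)) :=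
            (continuous_const.add continuous_id).tendsto 0
          simpa using this
        have hlg : Filter.Tendsto (fun u : ℝ => Real.log (1 + u)) (𝓝 (0:ℝ)) (𝓝 (Real.log 1)) :=
          ((Real.continuousAt_log one_ne_zero).tendsto.comp hc)
        exact (tendsto_const_nhds.sub (tendsto_const_nhds.mul hlg)).mono_left nhdsWithin_le_nhds
      rw [Real.log_one, mul_zero, sub_zero] at hlog
      refine hlog.congr' ?_
      filter_upwards [self_mem_nhdsWithin] with u hu
      have : (0:ℝ) < u := hu
      have := hk2 u this
      linarith
    exact tendsto_nhds_unique hκlim h2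
  -- tilde functions
  set bt : ℝ → ℝ := fun t => b t - α * Real.log t with hbtdef
  set dt : ℝ → ℝ := fun t => d t - β * Real.log t with hdtdef
  have hlogc : ContinuousOn Real.log (Ioi (0:ℝ)) :=
    Real.continuousOn_log.mono (fun x hx => by
      have : (0:ℝ) < x := hx
      exact Set.mem_compl_singleton_iff.mpr (ne_of_gt this))
  have hbtc : ContinuousOn bt (Ioi 0) := hcb.sub (continuousOn_const.mul hlogc)
  have hdtc : ContinuousOn dt (Ioi 0) := hcd.sub (continuousOn_const.mul hlogc)
  -- equation (P)
  have hP : ∀ x u : ℝ, 0 < x → 0 < u → bt (u*(1+x)) - bt u = dt (x*(1+u)) - dt x := by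
    intro x u hx hu
    have h := heq' x hx u hu
    have ha := hk1 x hx
    have hc := hk2 u hu
    have l1 : Real.log (u*(1+x)) = Real.log u + Real.log (1+x) :=
      Real.log_mul (ne_of_gt hu) (by positivity)
    have l2 : Real.log (x*(1+u)) = Real.log x + Real.log (1+u) :=
      Real.log_mul (ne_of_gt hx) (by positivity)
    simp only [hbtdef, hdtdef]
    rw [l1, l2]
    have := hκκ
    linarith
  -- zero ratio limits for bt, dt
  have hbt0 : ∀ ρ : ℝ, 0 < ρ → Filter.Tendsto (fun v => bt (ρ*v) - bt v) (𝓝[>] (0:ℝ)) (𝓝 0) := by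
    intro ρ hρ
    have h := (hαlim ρ hρ).sub_const (α * Real.log ρ)
    rw [sub_self] at h
    refine h.congr' ?_
    filter_upwards [self_mem_nhdsWithin] with v hv
    have hv0 : (0:ℝ) < v := hv
    have : Real.log (ρ*v) = Real.log ρ + Real.log v := Real.log_mul (ne_of_gt hρ) (ne_of_gt hv0)
    simp only [hbtdef]
    rw [this]; ring
  have hdt0 : ∀ ρ : ℝ, 0 < ρ → Filter.Tendsto (fun v => dt (ρ*v) - dt v) (𝓝[>] (0:ℝ)) (𝓝 0) := by
    intro ρ hρ
    have h := (hβlim ρ hρ).sub_const (β * Real.log ρ)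
    rw [sub_self] at h
    refine h.congr' ?_
    filter_upwards [self_mem_nhdsWithin] with v hv
    have hv0 : (0:ℝ) < v := hv
    have : Real.log (ρ*v) = Real.log ρ + Real.log v := Real.log_mul (ne_of_gt hρ) (ne_of_gt hv0)
    simp only [hdtdef]
    rw [this]; ring
  -- teleport identities
  have hT1 : ∀ y p : ℝ, 0 < y → 0 < p → bt (y+p) - bt y = dt (p/y + p) - dt (p/y) := by
    intro y p hy hp
    have h := hP (p/y) y (by positivity) hy
    rw [show y * (1 + p/y) = y + p from by field_simp,
      show (p/y) * (1 + y) = p/y + p from by field_simp] at h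
    exact h
  have hT2 : ∀ y p : ℝ, 0 < y → 0 < p → dt (y+p) - dt y = bt (p/y + p) - bt (p/y) := by
    intro y p hy hp
    have h := hP y (p/y) hy (by positivity)
    rw [show (p/y) * (1 + y) = p/y + p from by field_simp,
      show y * (1 + p/y) = y + p from by field_simp] at h
    linarith
  -- atTop limits
  have hdiv : ∀ z : ℝ, 0 < z → Filter.Tendsto (fun y : ℝ => z/y) atTop (𝓝[>] (0:ℝ)) := by
    intro z hz
    apply tendsto_nhdsWithin_iff.mpr
    constructor
    · exact tendsto_const_nhds.div_atTop tendsto_id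
    · filter_upwards [eventually_gt_atTop 0] with y hy
      exact Set.mem_Ioi.mpr (by positivity)
  have hLgen : ∀ (f g : ℝ → ℝ), ContinuousOn g (Ioi 0) →
      (∀ ρ : ℝ, 0 < ρ → Filter.Tendsto (fun v => g (ρ*v) - g v) (𝓝[>] (0:ℝ)) (𝓝 0)) →
      (∀ y p : ℝ, 0 < y → 0 < p → f (y+p) - f y = g (p/y + p) - g (p/y)) →
      ∀ z z' : ℝ, 0 < z → 0 < z' →
      Filter.Tendsto (fun y => f (y+z) - f (y+z')) atTop (𝓝 (g z - g z')) := by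
    intro f g hgc hg0 hTT z z' hz hz'
    have mk : ∀ w : ℝ, 0 < w → Filter.Tendsto (fun y : ℝ => g (w/y + w)) atTop (𝓝 (g w)) := by
      intro w hw
      apply tendsto_comp_pos hgc hw
      · have : Filter.Tendsto (fun y : ℝ => w/y + w) atTop (𝓝 (0 + w)) :=
          (tendsto_const_nhds.div_atTop tendsto_id).add_const w
        simpa using this
      · filter_upwards [eventually_gt_atTop 0] with y hy
        exact Set.mem_Ioi.mpr (by positivity)
    have t1 := mk z hz
    have t2 := mk z' hz'
    have t3 : Filter.Tendsto (fun y : ℝ => g (z/y) - g (z'/y)) atTop (𝓝 0) := by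
      have h0 := (hg0 (z/z') (by positivity)).comp (hdiv z' hz')
      refine h0.congr' ?_
      filter_upwards [eventually_gt_atTop 0] with y hy
      simp only [Function.comp]
      rw [div_mul_div_comm, mul_comm z z', mul_div_mul_left _ _ (ne_of_gt hz')]
    have comb := (t1.sub t2).sub t3
    rw [sub_zero] at comb
    refine comb.congr' ?_
    filter_upwards [eventually_gt_atTop 0] with y hy
    have e1 := hTT y z hy hz
    have e2 := hTT y z' hy hz'
    linarith
  have hL := hLgen bt dt hdtc hdt0 hT1
  have hL' := hLgen dt bt hbtc hbt0 hT2
  -- constant increments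
  have hGgen : ∀ (f g : ℝ → ℝ),
      (∀ z z' : ℝ, 0 < z → 0 < z' →
        Filter.Tendsto (fun y => f (y+z) - f (y+z')) atTop (𝓝 (g z - g z'))) →
      ∀ δ z : ℝ, 0 < δ → 0 < z → g (z+δ) - g z = g (1+δ) - g 1 := by
    intro f g hLL δ z hδ hz
    have A1 := hLL (z+δ) z (by positivity) hz
    have A2 := hLL (1+δ) 1 (by positivity) one_pos
    have hshift : Filter.Tendsto (fun y : ℝ => y + (z-1)) atTop atTop :=
      tendsto_atTop_add_const_right atTop (z-1) tendsto_id
    have A2' := A2.comp hshift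
    have A2'' : Filter.Tendsto (fun y => f (y+(z+δ)) - f (y+z)) atTop (𝓝 (g (1+δ) - g 1)) := by
      refine A2'.congr ?_
      intro y
      simp only [Function.comp]
      rw [show y + (z-1) + (1+δ) = y + (z+δ) from by ring,
        show y + (z-1) + 1 = y + z from by ring]
    exact tendsto_nhds_unique A1 A2''
  have hGA := hGgen bt dt hL
  have hGB := hGgen dt bt hL'
  -- affine forms
  have haff : ∀ (g : ℝ → ℝ), ContinuousOn g (Ioi 0) →
      (∀ δ z : ℝ, 0 < δ → 0 < z → g (z+δ) - g z = g (1+δ) - g 1) →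
      ∀ z : ℝ, 0 < z → g z = (g 2 - g 1) * z + (g 1 - (g 2 - g 1)) := by
    intro g hgc hGG
    have hcont : ContinuousOn (fun δ : ℝ => g (1+δ) - g 1) (Ioi 0) := by
      apply ContinuousOn.sub _ continuousOn_const
      exact hgc.comp (continuous_const.add continuous_id).continuousOn
        (fun δ hδ => by
          have : (0:ℝ) < δ := hδ
          exact Set.mem_Ioi.mpr (by linarith))
    have hadd : ∀ s t : ℝ, 0 < s → 0 < t →
        g (1+(s+t)) - g 1 = (g (1+s) - g 1) + (g (1+t) - g 1) := by
      intro s t hs ht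
      have h := hGG t (1+s) ht (by linarith)
      rw [show (1+s)+t = 1+(s+t) from by ring] at h
      linarith
    have hlin := aux_linear (fun δ => g (1+δ) - g 1) hcont hadd
    have hone : g (1+(1:ℝ)) - g 1 = g 2 - g 1 := by norm_num
    intro z hz
    rcases lt_trichotomy z 1 with h | h | h
    · have h1 := hGG (1-z) z (by linarith) hz
      rw [show z + (1-z) = 1 from by ring] at h1
      have h2 := hlin (1-z) (by linarith)
      simp only [hone] at h2
      linarith
    · subst h; ring
    · have h2 := hlin (z-1) (by linarith)
      simp only [hone] at h2
      rw [show 1+(z-1) = z from by ring] at h2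
      linarith
  have hdform := haff dt hdtc hGA
  have hbform := haff bt hbtc hGB
  -- equal slopes
  have hslope : bt 2 - bt 1 = dt 2 - dt 1 := by
    have h := hP 1 1 one_pos one_pos
    rw [show (1:ℝ) * (1+1) = 2 from by norm_num] at h
    linarith
  -- assemble
  refine ⟨α, β, -(dt 2 - dt 1), -(dt 2 - dt 1),
    (dt 1 - (dt 2 - dt 1)) + κ₁, bt 1 - (bt 2 - bt 1),
    (bt 1 - (bt 2 - bt 1)) + κ₁, dt 1 - (dt 2 - dt 1), by ring, ?_⟩
  intro x hx
  have hx0 : (0:ℝ) < x := hx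
  have hbteq : bt x = b x - α * Real.log x := rfl
  have hdteq : dt x = d x - β * Real.log x := rfl
  have hsx : (bt 2 - bt 1) * x = (dt 2 - dt 1) * x := by rw [hslope]
  have hbx : b x = α * Real.log x - (-(dt 2 - dt 1)) * x + (bt 1 - (bt 2 - bt 1)) := by
    have h := hbform x hx0
    rw [hbteq] at h
    nlinarith [h, hsx]
  have hdx : d x = β * Real.log x - (-(dt 2 - dt 1)) * x + (dt 1 - (dt 2 - dt 1)) := by
    have h := hdform x hx0
    rw [hdteq] at h
    nlinarith [h]
  refine ⟨?_, ?_, ?_, ?_⟩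
  · have := hk1 x hx0
    rw [hdx] at this
    rw [this]; ring
  · exact hbx
  · have := hk2 x hx0
    rw [hbx] at this
    rw [this, ← hκκ]; ring
  · exact hdx
end
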